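/- arXiv:1705.07876 — 5 statements merged into one kernel-verified Lean document; each statement's English description precedes it below -/
import Mathlib

section
/- Let μ^(0) ⊂ μ^(1) ⊂ ... ⊂ μ^(N) be a chain of partitions where μ^(k) is obtained from μ^(k−1) by adding a single box in the northmost possible row r satisfying μ^(k−1)_r − μ^(0)_r < r − 1 such that the result is a partition. Let c_0,...,c_N ≥ 0 with Σ c_k = 1, μ̄ = Σ c_k μ^(k), and suppose |μ̄| − |μ^(0)| = K for an integer K with 0 ≤ K ≤ N. Then μ̄ is majorized by μ^(K): for every t, μ̄_1 + ... + μ̄_t ≤ μ^(K)_1 + ... + μ^(K)_t, and |μ̄| = |μ^(K)|. -/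
open Finset

/-- Sum of the first `t` coordinates of a vector. -/
def psum {n : ℕ} (v : Fin n → ℝ) (t : ℕ) : ℝ := ∑ i : Fin n, if (i : ℕ) < t then v i else 0

/-- Sum of the first `t` coordinates of a vector of naturals. -/
def npsum {n : ℕ} (v : Fin n → ℕ) (t : ℕ) : ℕ := ∑ i : Fin n, if (i : ℕ) < t then v i else 0

/-- The decreasing rearrangement `v↓` of a vector. -/
noncomputable def decSort {n : ℕ} (v : Fin n → ℝ) : Fin n → ℝ := fun i => v (Tuple.sort v i.rev)

/-- `Majorizes w v` : `v` is majorized by `w`. -/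
def Majorizes {n : ℕ} (w v : Fin n → ℝ) : Prop :=
  (∀ t, psum (decSort v) t ≤ psum (decSort w) t) ∧ ∑ i, v i = ∑ i, w i

/-- The permutahedron of `v`: convex hull of the orbit of `v` under coordinate permutations. -/
noncomputable def permutahedron {n : ℕ} (v : Fin n → ℝ) : Set (Fin n → ℝ) :=
  convexHull ℝ {w | ∃ σ : Equiv.Perm (Fin n), w = v ∘ σ}

/-- Row `ρ` (0-indexed; 1-indexed row `ρ+1`) can receive a box: the current excess over `lam`
is `< (ρ+1) - 1 = ρ` and adding a box keeps the shape a partition. -/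
def AddableRow {n : ℕ} (lam mu : Fin n → ℕ) (ρ : Fin n) : Prop :=
  mu ρ < lam ρ + (ρ : ℕ) ∧ Antitone (Function.update mu ρ (mu ρ + 1))

/-- One step of the northmost-box-adding construction relative to the base partition `lam`. -/
def NorthStep {n : ℕ} (lam muprev munext : Fin n → ℕ) : Prop :=
  ∃ ρ : Fin n, AddableRow lam muprev ρ ∧ (∀ ρ' : Fin n, ρ' < ρ → ¬ AddableRow lam muprev ρ') ∧
    munext = Function.update muprev ρ (muprev ρ + 1)

/-- A row- and column-strictly increasing skew tableau of shape `mu/lam` whose entries in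
(1-indexed) row `r+1` lie in `{1, ..., r}`, i.e. are at most `(r+1) - 1`. -/
def IsFlaggedTableau {n : ℕ} (lam mu : Fin n → ℕ) (T : Fin n → ℕ → ℕ) : Prop :=
  (∀ i, lam i ≤ mu i) ∧
  (∀ r : Fin n, ∀ c, lam r ≤ c → c < mu r → 1 ≤ T r c ∧ T r c ≤ (r : ℕ)) ∧
  (∀ r : Fin n, ∀ c c', lam r ≤ c → c < c' → c' < mu r → T r c < T r c') ∧
  (∀ r r' : Fin n, r < r' → ∀ c, lam r ≤ c → c < mu r → lam r' ≤ c → c < mu r' → T r c < T r' c)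

/-- The number of flagged tableaux of shape `mu/lam` (tableaux normalized to vanish off the shape). -/
noncomputable def flaggedCount {n : ℕ} (lam mu : Fin n → ℕ) : ℕ :=
  Set.ncard {T : Fin n → ℕ → ℕ | IsFlaggedTableau lam mu T ∧
    ∀ (r : Fin n) (c : ℕ), (c < lam r ∨ mu r ≤ c) → T r c = 0}

/-- The coefficient `a_{lam,mu}` in the Schur expansion of the symmetric Grothendieck polynomial. -/
noncomputable def grothCoeff {n : ℕ} (lam mu : Fin n → ℕ) : ℝ :=
  if Antitone mu ∧ ∀ i, lam i ≤ mu i then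
    (-1 : ℝ) ^ (∑ i, mu i - ∑ i, lam i) * flaggedCount lam mu
  else 0

/-- A semistandard Young tableau of shape `lam` with entries in `{1, ..., n}`. -/
def IsSSYT {n : ℕ} (lam : Fin n → ℕ) (T : Fin n → ℕ → ℕ) : Prop :=
  (∀ r : Fin n, ∀ c, c < lam r → 1 ≤ T r c ∧ T r c ≤ n) ∧
  (∀ r : Fin n, ∀ c c', c ≤ c' → c' < lam r → T r c ≤ T r c') ∧
  (∀ r r' : Fin n, r < r' → ∀ c, c < lam r' → c < lam r → T r c < T r' c)

/-- The Kostka number `K_{lam,α}`: the number of SSYT of shape `lam` and weight `α`. -/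
noncomputable def kostka {n : ℕ} (lam : Fin n → ℕ) (α : Fin n →₀ ℕ) : ℕ :=
  Set.ncard {T : Fin n → ℕ → ℕ | IsSSYT lam T ∧ (∀ (r : Fin n) (c : ℕ), lam r ≤ c → T r c = 0) ∧
    ∀ i : Fin n, α i = Set.ncard {p : Fin n × ℕ | p.2 < lam p.1 ∧ T p.1 p.2 = (i : ℕ) + 1}}

/-- The Schur polynomial `s_lam(x_1, ..., x_n)`, as the generating polynomial of SSYT. -/
noncomputable def schur {n : ℕ} (lam : Fin n → ℕ) : MvPolynomial (Fin n) ℝ :=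
  ∑ α ∈ Finset.Iic (Finsupp.equivFunOnFinite.symm (fun _ : Fin n => ∑ i, lam i)),
    (kostka lam α : ℝ) • MvPolynomial.monomial α 1

/-- The symmetric Grothendieck polynomial `G_lam(x_1, ..., x_n) = ∑_mu a_{lam,mu} s_mu`. -/
noncomputable def grothendieck {n : ℕ} (lam : Fin n → ℕ) : MvPolynomial (Fin n) ℝ :=
  ∑ m ∈ Finset.Iic (Finsupp.equivFunOnFinite.symm (fun i : Fin n => lam i + (i : ℕ))),
    grothCoeff lam (fun i => m i) • schur (fun i => m i)

/-- The Newton polytope of a polynomial: convex hull of its exponent vectors. -/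
noncomputable def newton {n : ℕ} (f : MvPolynomial (Fin n) ℝ) : Set (Fin n → ℝ) :=
  convexHull ℝ ((fun α : Fin n →₀ ℕ => fun i => (α i : ℝ)) '' (f.support : Set (Fin n →₀ ℕ)))

/-- A polynomial has saturated Newton polytope (SNP) if every lattice point of its Newton
polytope is an exponent vector with nonzero coefficient. -/
def SNP {n : ℕ} (f : MvPolynomial (Fin n) ℝ) : Prop :=
  ∀ α : Fin n →₀ ℕ, (fun i => (α i : ℝ)) ∈ newton f → MvPolynomial.coeff α f ≠ 0

lemma npsum_update {n : ℕ} (mu : Fin n → ℕ) (ρ : Fin n) (t : ℕ) :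
    npsum (Function.update mu ρ (mu ρ + 1)) t
      = npsum mu t + if (ρ : ℕ) < t then 1 else 0 := by
  classical
  unfold npsum
  have h : ∀ i : Fin n,
      (if (i : ℕ) < t then Function.update mu ρ (mu ρ + 1) i else 0)
        = (if (i : ℕ) < t then mu i else 0)
          + (if i = ρ then (if (ρ : ℕ) < t then 1 else 0) else 0) := by
    intro i
    rcases eq_or_ne i ρ with rfl | hi
    · simp only [Function.update_self, if_pos rfl]
      split <;> simp
    · simp [Function.update_of_ne hi, hi]
  rw [Finset.sum_congr rfl fun i _ => h i, Finset.sum_add_distrib]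
  simp

lemma psum_natCast {n : ℕ} (v : Fin n → ℕ) (t : ℕ) :
    psum (fun j => (v j : ℝ)) t = (npsum v t : ℝ) := by
  unfold psum npsum
  push_cast
  rfl

lemma psum_convex {n N : ℕ} (c : Fin (N + 1) → ℝ) (v : Fin (N + 1) → Fin n → ℝ) (t : ℕ) :
    psum (∑ k, c k • v k) t = ∑ k, c k * psum (v k) t := by
  unfold psum
  have h1 : ∀ i : Fin n, (if (i : ℕ) < t then (∑ k, c k • v k) i else 0)
      = ∑ k, (if (i : ℕ) < t then c k * v k i else 0) := by
    intro i
    rw [Finset.sum_apply]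
    split
    · simp
    · simp
  rw [Finset.sum_congr rfl fun i _ => h1 i, Finset.sum_comm]
  apply Finset.sum_congr rfl
  intro k _
  rw [Finset.mul_sum]
  apply Finset.sum_congr rfl
  intro i _
  split <;> simp

lemma rowMono {n : ℕ} {lam a : Fin n → ℕ} (ha : Antitone a) {ρ1 ρ2 : Fin n}
    (hmin : ∀ ρ' : Fin n, ρ' < ρ1 → ¬ AddableRow lam a ρ')
    (h2 : AddableRow lam (Function.update a ρ1 (a ρ1 + 1)) ρ2) : ρ1 ≤ ρ2 := by
  by_contra hcon
  push_neg at hcon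
  refine hmin ρ2 hcon ⟨?_, ?_⟩
  · have := h2.1
    rwa [Function.update_of_ne (ne_of_lt hcon)] at this
  · set b := Function.update a ρ1 (a ρ1 + 1) with hb
    have hbρ2 : b ρ2 = a ρ2 := Function.update_of_ne (ne_of_lt hcon) _ _
    have h2b : Antitone (Function.update b ρ2 (a ρ2 + 1)) := by
      have := h2.2; rwa [hbρ2] at this
    intro i j hij
    have heq : ∀ x : Fin n, x ≠ ρ1 →
        Function.update a ρ2 (a ρ2 + 1) x = Function.update b ρ2 (a ρ2 + 1) x := by
      intro x hx
      rcases eq_or_ne x ρ2 with rfl | hx2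
      · simp
      · rw [Function.update_of_ne hx2, Function.update_of_ne hx2, hb,
          Function.update_of_ne hx]
    rcases eq_or_ne j ρ1 with rfl | hj
    · -- value at j is a ρ1
      rcases eq_or_ne i j with rfl | hi
      · exact le_refl _
      have hij' : i < j := lt_of_le_of_ne hij hi
      have hjval : Function.update a ρ2 (a ρ2 + 1) j = a j :=
        Function.update_of_ne (ne_of_gt hcon) _ _
      have hbval : Function.update b ρ2 (a ρ2 + 1) j = a j + 1 := by
        rw [Function.update_of_ne (ne_of_gt hcon), hb, Function.update_self]
      have := h2b hij
      rw [hbval, ← heq i hi] at this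
      rw [hjval]
      omega
    · rcases eq_or_ne i ρ1 with rfl | hi
      · -- i = ρ1 < j (since j ≠ ρ1, i ≤ j)
        have hij' : i < j := lt_of_le_of_ne hij (Ne.symm hj)
        have hjρ2 : j ≠ ρ2 := ne_of_gt (lt_trans hcon hij')
        rw [Function.update_of_ne hjρ2, Function.update_of_ne (ne_of_gt hcon)]
        exact ha (le_of_lt hij')
      · rw [heq i hi, heq j hj]
        exact h2b hij

/-- Claim C of Escobar–Yong: if `μ^(0) ⊂ ⋯ ⊂ μ^(N)` is the northmost-box-adding chain,
`μ̄ = ∑ c_k μ^(k)` is a convex combination and `|μ̄| - |μ^(0)| = K`, then `μ̄` is majorized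
by `μ^(K)`. -/
theorem claimC {n N : ℕ} (lam : Fin n → ℕ) (hlam : Antitone lam)
    (μ : Fin (N + 1) → Fin n → ℕ) (h0 : μ 0 = lam)
    (hchain : ∀ k : Fin N, NorthStep lam (μ k.castSucc) (μ k.succ))
    (c : Fin (N + 1) → ℝ) (hc : ∀ k, 0 ≤ c k) (hc1 : ∑ k, c k = 1)
    (K : ℕ) (hK : K ≤ N)
    (hKsum : ∑ i, (∑ k, c k • fun j => (μ k j : ℝ)) i = ∑ i, (lam i : ℝ) + K) :
    (∀ t, psum (∑ k, c k • fun j => (μ k j : ℝ)) t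
        ≤ psum (fun j => (μ ⟨K, Nat.lt_succ_of_le hK⟩ j : ℝ)) t) ∧
      ∑ i, (∑ k, c k • fun j => (μ k j : ℝ)) i
        = ∑ i, (μ ⟨K, Nat.lt_succ_of_le hK⟩ i : ℝ) := by
  classical
  rcases Nat.eq_zero_or_pos n with hn | hn
  · subst hn
    refine ⟨fun t => ?_, ?_⟩
    · simp [psum]
    · simp
  -- ℕ-indexed chain
  set ν : ℕ → Fin n → ℕ :=
    fun k => μ ⟨min k N, Nat.lt_succ_of_le (Nat.min_le_right k N)⟩ with hνdef
  have hνeq : ∀ (k : ℕ) (hk : k ≤ N), ν k = μ ⟨k, Nat.lt_succ_of_le hk⟩ := by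
    intro k hk
    simp only [hνdef]
    exact congrArg μ (Fin.ext (Nat.min_eq_left hk))
  have hν0 : ν 0 = lam := by
    rw [hνeq 0 (Nat.zero_le _)]
    exact h0
  have hstep : ∀ k, k < N → NorthStep lam (ν k) (ν (k + 1)) := by
    intro k hk
    rw [hνeq k (le_of_lt hk), hνeq (k + 1) hk]
    exact hchain ⟨k, hk⟩
  have hνstab : ∀ k, N ≤ k → ν k = ν N := by
    intro k hk
    simp only [hνdef]
    exact congrArg μ (Fin.ext (by simp [Nat.min_eq_right hk]))
  have hAnti : ∀ k, Antitone (ν k) := by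
    intro k
    induction k with
    | zero => rw [hν0]; exact hlam
    | succ k ih =>
      rcases lt_or_ge k N with hk | hk
      · obtain ⟨ρ, hρ1, -, hρ3⟩ := hstep k hk
        rw [hρ3]
        exact hρ1.2
      · rw [hνstab (k + 1) (by omega), ← hνstab k hk]
        exact ih
  have hex : ∀ k : ℕ, ∃ ρ : Fin n, k < N →
      AddableRow lam (ν k) ρ ∧ (∀ ρ' : Fin n, ρ' < ρ → ¬ AddableRow lam (ν k) ρ') ∧
      ν (k + 1) = Function.update (ν k) ρ (ν k ρ + 1) := by
    intro k
    rcases lt_or_ge k N with hk | hk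
    · obtain ⟨ρ, h1, h2, h3⟩ := hstep k hk
      exact ⟨ρ, fun _ => ⟨h1, h2, h3⟩⟩
    · exact ⟨⟨0, hn⟩, fun h => absurd h (by omega)⟩
  choose r hr using hex
  have hrstep : ∀ k, k + 1 < N → (r k : ℕ) ≤ (r (k + 1) : ℕ) := by
    intro k hk
    have h1 := hr k (by omega)
    have h3 := (hr (k + 1) hk).1
    rw [h1.2.2] at h3
    exact Fin.le_def.mp (rowMono (hAnti k) h1.2.1 h3)
  have hrmono : ∀ j k, j ≤ k → k < N → (r j : ℕ) ≤ (r k : ℕ) := by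
    intro j k hjk hk
    induction k with
    | zero =>
      have : j = 0 := by omega
      subst this; exact le_refl _
    | succ k ih =>
      rcases Nat.lt_or_ge j (k + 1) with h | h
      · exact le_trans (ih (by omega) (by omega)) (hrstep k hk)
      · have : j = k + 1 := by omega
        subst this; exact le_refl _
  have hsize : ∀ k, k ≤ N → ∑ i, ν k i = (∑ i, lam i) + k := by
    intro k
    induction k with
    | zero => intro _; simp [hν0]
    | succ k ih =>
      intro hk
      have hkN : k < N := by omega
      have h3 := (hr k hkN).2.2
      rw [h3, Finset.sum_update_of_mem (Finset.mem_univ _), ← Finset.erase_eq]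
      have h4 : ∑ i, ν k i = ν k (r k) + ∑ i ∈ Finset.univ.erase (r k), ν k i :=
        (Finset.add_sum_erase _ _ (Finset.mem_univ _)).symm
      have h5 := ih (by omega)
      omega
  have hμν : ∀ k : Fin (N + 1), μ k = ν (k : ℕ) := by
    intro k
    rw [hνeq (k : ℕ) (Nat.lt_succ_iff.mp k.isLt)]
  have hsum_i : ∀ k : Fin (N + 1), ∑ i, (μ k i : ℝ) = (∑ i, (lam i : ℝ)) + ((k : ℕ) : ℝ) := by
    intro k
    have hs := hsize (k : ℕ) (Nat.lt_succ_iff.mp k.isLt)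
    rw [hμν k, ← Nat.cast_sum, hs]
    push_cast
    rfl
  have h1 : ∑ i, (∑ k, c k • fun j => (μ k j : ℝ)) i
      = ∑ k : Fin (N + 1), c k * (∑ i, (μ k i : ℝ)) := by
    simp only [Finset.sum_apply, Pi.smul_apply, smul_eq_mul]
    rw [Finset.sum_comm]
    exact Finset.sum_congr rfl fun k _ => (Finset.mul_sum _ _ _).symm
  have hck : ∑ k : Fin (N + 1), c k * ((k : ℕ) : ℝ) = (K : ℝ) := by
    have h2 : ∀ k : Fin (N + 1), c k * (∑ i, (μ k i : ℝ))
        = c k * (∑ i, (lam i : ℝ)) + c k * ((k : ℕ) : ℝ) := fun k => by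
      rw [hsum_i k]; ring
    have h3 := hKsum
    rw [h1, Finset.sum_congr rfl fun k _ => h2 k, Finset.sum_add_distrib,
      ← Finset.sum_mul, hc1, one_mul] at h3
    linarith
  have hEq : ∑ i, (∑ k, c k • fun j => (μ k j : ℝ)) i
      = ∑ i, (μ ⟨K, Nat.lt_succ_of_le hK⟩ i : ℝ) := by
    rw [hKsum, hsum_i ⟨K, Nat.lt_succ_of_le hK⟩]
  refine ⟨fun t => ?_, hEq⟩
  set F : ℕ → ℕ := fun k => npsum (ν k) t with hF
  have hFstep : ∀ k, k < N → F (k + 1) = F k + (if (r k : ℕ) < t then 1 else 0) := by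
    intro k hk
    have h3 := (hr k hk).2.2
    simp only [hF]
    rw [h3, npsum_update]
  have hFstab : ∀ k, N ≤ k → F (k + 1) = F k := by
    intro k hk
    simp only [hF]
    rw [hνstab (k + 1) (by omega), hνstab k hk]
  have hFmono : Monotone F := by
    apply monotone_nat_of_le_succ
    intro k
    rcases lt_or_ge k N with hk | hk
    · rw [hFstep k hk]; omega
    · rw [hFstab k hk]
  have hterm : ∀ k : Fin (N + 1), psum (fun j => (μ k j : ℝ)) t = (F (k : ℕ) : ℝ) := by
    intro k
    rw [psum_natCast, hμν k]
  have hterm2 : ∑ k : Fin (N + 1), c k * psum (fun j => (μ k j : ℝ)) t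
      = ∑ k : Fin (N + 1), c k * (F (k : ℕ) : ℝ) :=
    Finset.sum_congr rfl fun k _ => by rw [hterm k]
  rw [psum_convex, hterm2, hterm ⟨K, Nat.lt_succ_of_le hK⟩]
  by_cases hcase : ∀ j, j < K → (r j : ℕ) < t
  · have hFK : ∀ k, k ≤ K → F k = F 0 + k := by
      intro k
      induction k with
      | zero => intro _; omega
      | succ k ih =>
        intro hk
        rw [hFstep k (by omega), ih (by omega), if_pos (hcase k (by omega))]
        omega
    have hFle : ∀ k, F k ≤ F 0 + k := by
      intro k
      induction k with
      | zero => exact le_refl _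
      | succ k ih =>
        rcases lt_or_ge k N with hk | hk
        · rw [hFstep k hk]; split <;> omega
        · rw [hFstab k hk]; omega
    calc ∑ k : Fin (N + 1), c k * (F (k : ℕ) : ℝ)
        ≤ ∑ k : Fin (N + 1), c k * ((F 0 : ℝ) + ((k : ℕ) : ℝ)) := by
          apply Finset.sum_le_sum
          intro k _
          apply mul_le_mul_of_nonneg_left _ (hc k)
          exact_mod_cast hFle (k : ℕ)
      _ = (F 0 : ℝ) + (K : ℝ) := by
          simp only [mul_add]
          rw [Finset.sum_add_distrib, ← Finset.sum_mul, hc1, one_mul, hck]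
      _ = (F K : ℝ) := by
          rw [hFK K le_rfl]; push_cast; ring
  · push_neg at hcase
    obtain ⟨j0, hj0K, hj0t⟩ := hcase
    have hconst : ∀ k, j0 ≤ k → k < N → F (k + 1) = F k := by
      intro k hk hkN
      rw [hFstep k hkN, if_neg (by have := hrmono j0 k hk hkN; omega)]
      omega
    have hFconst : ∀ k, j0 ≤ k → F k = F j0 := by
      intro k
      induction k with
      | zero => intro hk; have : j0 = 0 := by omega
                rw [this]
      | succ k ih =>
        intro hk
        rcases eq_or_lt_of_le hk with heq | hlt
        · rw [← heq]
        · have hk' : j0 ≤ k := by omega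
          rcases lt_or_ge k N with hkN | hkN
          · rw [hconst k hk' hkN, ih hk']
          · rw [hFstab k hkN, ih hk']
    have hFle : ∀ k, F k ≤ F K := by
      intro k
      rcases le_or_gt k K with h | h
      · exact hFmono h
      · rw [hFconst k (by omega), ← hFconst K (by omega)]
    calc ∑ k : Fin (N + 1), c k * (F (k : ℕ) : ℝ)
        ≤ ∑ k : Fin (N + 1), c k * (F K : ℝ) := by
          apply Finset.sum_le_sum
          intro k _
          exact mul_le_mul_of_nonneg_left (by exact_mod_cast hFle (k : ℕ)) (hc k)
      _ = (F K : ℝ) := by rw [← Finset.sum_mul, hc1, one_mul]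
end

section
/- Fix n ≥ 1 and a partition λ with at most n parts. Define μ^(0) = λ and, for k ≥ 1, μ^(k) to be μ^(k−1) with one box added in the northmost row r such that μ^(k−1)_r − λ_r < r − 1 and the result is a partition (stopping when no such row exists or k = n). Then for each k, μ^(k) is the maximum in dominance order among all partitions μ of size |λ| + k with at most n parts satisfying μ_i ≤ λ_i + (i − 1) for all i and μ ⊇ λ for which the Grothendieck coefficient a_{λ,μ} is nonzero. In particular, any partition μ with a_{λ,μ} ≠ 0 and |μ| = |λ| + k satisfies μ ≤_D μ^(k). -/
open Finset

section ClaimAAux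

variable {n : ℕ}

/-- The column capacity: `cap lam i = min_{j ≤ i} (lam j + j)`. -/
noncomputable def cap (lam : Fin n → ℕ) (i : Fin n) : ℕ :=
  Finset.inf' (Finset.Iic i) ⟨i, Finset.mem_Iic.2 le_rfl⟩ (fun j => lam j + j)

lemma cap_le {lam : Fin n → ℕ} {i j : Fin n} (h : j ≤ i) : cap lam i ≤ lam j + j :=
  Finset.inf'_le _ (Finset.mem_Iic.2 h)

lemma le_cap {lam : Fin n → ℕ} {i : Fin n} {x : ℕ} (h : ∀ j ≤ i, x ≤ lam j + j) :
    x ≤ cap lam i :=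
  Finset.le_inf' _ _ (fun j hj => h j (Finset.mem_Iic.1 hj))

lemma cap_anti {lam : Fin n → ℕ} {i j : Fin n} (h : j ≤ i) : cap lam i ≤ cap lam j :=
  le_cap fun j' hj' => cap_le (le_trans hj' h)

lemma mu_le_cap {lam mu : Fin n → ℕ} (hmu : Antitone mu) (hb : ∀ i : Fin n, mu i ≤ lam i + i)
    (i : Fin n) : mu i ≤ cap lam i :=
  le_cap fun j hj => le_trans (hmu hj) (hb j)

lemma npsum_add_tail (v : Fin n → ℕ) (t : ℕ) :
    npsum v t + ∑ i : Fin n, (if (i : ℕ) < t then 0 else v i) = ∑ i, v i := by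
  unfold npsum
  rw [← Finset.sum_add_distrib]
  exact Finset.sum_congr rfl fun i _ => by split <;> simp

lemma flagged_row_bound {lam mu : Fin n → ℕ} {T : Fin n → ℕ → ℕ}
    (hT : IsFlaggedTableau lam mu T) (i : Fin n) : mu i ≤ lam i + i := by
  by_contra h
  push_neg at h
  have key : ∀ j : ℕ, lam i + j < mu i → j + 1 ≤ T i (lam i + j) := by
    intro j
    induction j with
    | zero => intro hj; simpa using (hT.2.1 i (lam i) le_rfl (by omega)).1
    | succ j ih =>
      intro hj
      have h1 := ih (by omega)
      have h2 := hT.2.2.1 i (lam i + j) (lam i + j + 1) (by omega) (by omega) (by omega)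
      rw [← Nat.add_assoc]
      omega
  have h1 := key i h
  have h2 := (hT.2.1 i (lam i + i) (by omega) h).2
  omega

lemma exists_flagged {lam mu : Fin n → ℕ} (hmu : Antitone mu) (hle : ∀ i, lam i ≤ mu i)
    (hb : ∀ i : Fin n, mu i ≤ lam i + i) : ∃ T, IsFlaggedTableau lam mu T := by
  refine ⟨fun r c => c + r + 1 - mu r, hle, ?_, ?_, ?_⟩
  · intro r c h1 h2; dsimp only; have := hb r; constructor <;> omega
  · intro r c c' h1 h2 h3; dsimp only; have := hb r; omega
  · intro r r' hrr c h1 h2 h1' h2'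
    dsimp only
    have h3 := hb r
    have h4 := hmu (le_of_lt hrr)
    have h5 : (r : ℕ) < (r' : ℕ) := hrr
    omega

lemma antitone_update {μk : Fin n → ℕ} (hμ : Antitone μk) {i : Fin n}
    (h : ∀ j, j < i → μk i < μk j) : Antitone (Function.update μk i (μk i + 1)) := by
  intro a b hab
  by_cases h1 : a = i
  · subst h1
    rcases eq_or_lt_of_le hab with rfl | hlt
    · exact le_rfl
    · rw [Function.update_self, Function.update_of_ne hlt.ne']
      have := hμ hab
      omega
  · by_cases h2 : b = i
    · subst h2
      rw [Function.update_self, Function.update_of_ne h1]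
      exact h a (lt_of_le_of_ne hab h1)
    · rw [Function.update_of_ne h1, Function.update_of_ne h2]
      exact hμ hab

lemma inv_step {lam μk μk1 : Fin n → ℕ} {k : ℕ}
    (h : Antitone μk ∧ (∀ i, lam i ≤ μk i) ∧ (∀ i : Fin n, μk i ≤ lam i + i) ∧
      (∑ i, μk i = ∑ i, lam i + k) ∧ ∃ ρ : ℕ, (∀ i : Fin n, (i : ℕ) < ρ → μk i = cap lam i) ∧
        (∀ i : Fin n, ρ < (i : ℕ) → μk i = lam i))
    (hs : NorthStep lam μk μk1) :
    Antitone μk1 ∧ (∀ i, lam i ≤ μk1 i) ∧ (∀ i : Fin n, μk1 i ≤ lam i + i) ∧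
      (∑ i, μk1 i = ∑ i, lam i + (k + 1)) ∧ ∃ ρ : ℕ, (∀ i : Fin n, (i : ℕ) < ρ → μk1 i = cap lam i) ∧
        (∀ i : Fin n, ρ < (i : ℕ) → μk1 i = lam i) := by
  obtain ⟨hmono, hge, hub, hsum, ρ0, hfull, htail⟩ := h
  unfold NorthStep at hs
  obtain ⟨ρ, hadd, hmin, rfl⟩ := hs
  unfold AddableRow at hadd
  obtain ⟨hadd1, hadd2⟩ := hadd
  -- full rows below the chosen row
  have key : ∀ i : Fin n, (∀ j : Fin n, j < i → μk j = cap lam j) →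
      (i : ℕ) < (ρ : ℕ) → μk i = cap lam i := by
    intro i ihj hiρ
    have hile : μk i ≤ cap lam i := mu_le_cap hmono hub i
    have hna := hmin i hiρ
    unfold AddableRow at hna
    by_cases hA : ∀ j, j < i → μk i < μk j
    · have h2 := antitone_update hmono hA
      have h1 : ¬ μk i < lam i + (i : ℕ) := fun hc => hna ⟨hc, h2⟩
      have h3 := cap_le (lam := lam) (le_refl i)
      omega
    · push_neg at hA
      obtain ⟨j, hj, hje⟩ := hA
      have h3 := ihj j hj
      have h4 := hmono hj.le
      have h5 := cap_anti (lam := lam) hj.le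
      omega
  have hfullnew : ∀ i : Fin n, (i : ℕ) < (ρ : ℕ) → μk i = cap lam i := by
    have aux : ∀ m : ℕ, ∀ i : Fin n, (i : ℕ) < m → (i : ℕ) < (ρ : ℕ) → μk i = cap lam i := by
      intro m
      induction m with
      | zero => intro i hi; omega
      | succ m ih =>
        intro i hi hiρ
        refine key i (fun j hj => ?_) hiρ
        have hj' : (j : ℕ) < (i : ℕ) := hj
        exact ih j (by omega) (by omega)
    exact fun i hi => aux n i i.isLt hi
  refine ⟨hadd2, ?_, ?_, ?_, (ρ : ℕ), ?_, ?_⟩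
  · intro i
    rcases eq_or_ne i ρ with rfl | hne
    · rw [Function.update_self]; exact le_trans (hge i) (Nat.le_succ _)
    · rw [Function.update_of_ne hne]; exact hge i
  · intro i
    rcases eq_or_ne i ρ with rfl | hne
    · rw [Function.update_self]; omega
    · rw [Function.update_of_ne hne]; exact hub i
  · rw [Finset.sum_update_of_mem (Finset.mem_univ ρ), ← Finset.erase_eq]
    rw [← Finset.sum_erase_add Finset.univ μk (Finset.mem_univ ρ)] at hsum
    omega
  · intro i hi
    have hne : i ≠ ρ := fun hc => by subst hc; omega
    rw [Function.update_of_ne hne]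
    exact hfullnew i hi
  · intro i hi
    have hne : i ≠ ρ := fun hc => by subst hc; omega
    rw [Function.update_of_ne hne]
    by_cases hcases : ρ0 < (i : ℕ)
    · exact htail i hcases
    · -- impossible: then ρ < ρ0 and the chosen row was already full
      exfalso
      have hρρ0 : (ρ : ℕ) < ρ0 := by omega
      have hρfull : μk ρ = cap lam ρ := hfull ρ hρρ0
      rcases Nat.eq_zero_or_pos (ρ : ℕ) with hz | hpos
      · have := hge ρ
        omega
      · obtain ⟨j0, hj0mem, hj0eq⟩ :=
          Finset.exists_mem_eq_inf' (⟨ρ, Finset.mem_Iic.2 le_rfl⟩ : (Finset.Iic ρ).Nonempty)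
            (fun j => lam j + j)
        have hj0le : j0 ≤ ρ := Finset.mem_Iic.1 hj0mem
        have hcapρ : cap lam ρ = lam j0 + j0 := hj0eq
        have hj0ne : j0 ≠ ρ := by
          intro hc; subst hc; omega
        have hj0lt : j0 < ρ := lt_of_le_of_ne hj0le hj0ne
        have hj0lt' : (j0 : ℕ) < (ρ : ℕ) := hj0lt
        have hj0full : μk j0 = cap lam j0 := hfull j0 (by omega)
        have hcapj0 : cap lam j0 ≤ lam j0 + j0 := cap_le le_rfl
        -- antitone of the update gives μk ρ + 1 ≤ μk j0
        have hant := hadd2 hj0lt.le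
        rw [Function.update_self, Function.update_of_ne hj0ne] at hant
        omega

end ClaimAAux

/-- Claim A of Escobar–Yong: `μ^(k)` is the dominance-order maximum among all partitions `μ`
of size `|λ| + k` with at most `n` parts, satisfying `μ_i ≤ λ_i + (i-1)`, `μ ⊇ λ`, and
admitting a flagged tableau of shape `μ/λ` (i.e. `a_{λ,μ} ≠ 0`). -/
theorem claimA {n N : ℕ} (lam : Fin n → ℕ) (hlam : Antitone lam)
    (μ : Fin (N + 1) → Fin n → ℕ) (h0 : μ 0 = lam)
    (hchain : ∀ k : Fin N, NorthStep lam (μ k.castSucc) (μ k.succ)) (k : Fin (N + 1)) :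
    (Antitone (μ k) ∧ (∀ i, lam i ≤ μ k i) ∧ (∀ i : Fin n, μ k i ≤ lam i + (i : ℕ)) ∧
        (∑ i, μ k i = ∑ i, lam i + (k : ℕ)) ∧ ∃ T, IsFlaggedTableau lam (μ k) T) ∧
      ∀ mu : Fin n → ℕ, Antitone mu → (∃ T, IsFlaggedTableau lam mu T) →
        ∑ i, mu i = ∑ i, lam i + (k : ℕ) → ∀ t, npsum mu t ≤ npsum (μ k) t := by
  have INV : ∀ k : Fin (N + 1), Antitone (μ k) ∧ (∀ i, lam i ≤ μ k i) ∧
      (∀ i : Fin n, μ k i ≤ lam i + i) ∧ (∑ i, μ k i = ∑ i, lam i + (k : ℕ)) ∧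
      ∃ ρ : ℕ, (∀ i : Fin n, (i : ℕ) < ρ → μ k i = cap lam i) ∧
        (∀ i : Fin n, ρ < (i : ℕ) → μ k i = lam i) := by
    intro k
    induction k using Fin.induction with
    | zero =>
      rw [h0]
      exact ⟨hlam, fun i => le_rfl, fun i => Nat.le_add_right _ _, by simp, 0,
        fun i hi => absurd hi (by omega), fun i _ => rfl⟩
    | succ k ih =>
      have := inv_step ih (hchain k)
      simpa using this
  obtain ⟨hmono, hge, hub, hsum, ρ0, hfull, htail⟩ := INV k
  refine ⟨⟨hmono, hge, hub, hsum, exists_flagged hmono hge hub⟩, ?_⟩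
  rintro mu hmu ⟨T, hT⟩ hsum' t
  have hge' := hT.1
  have hub' : ∀ i : Fin n, mu i ≤ lam i + i := fun i => flagged_row_bound hT i
  by_cases ht : t ≤ ρ0
  · unfold npsum
    apply Finset.sum_le_sum
    intro i _
    split_ifs with hi
    · calc mu i ≤ cap lam i := mu_le_cap hmu hub' i
        _ = μ k i := (hfull i (by omega)).symm
    · exact le_rfl
  · have e1 := npsum_add_tail mu t
    have e2 := npsum_add_tail (μ k) t
    have e3 : ∑ i : Fin n, (if (i : ℕ) < t then 0 else lam i) ≤
        ∑ i : Fin n, (if (i : ℕ) < t then 0 else mu i) :=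
      Finset.sum_le_sum fun i _ => by split_ifs with h; exacts [le_rfl, hge' i]
    have e4 : ∑ i : Fin n, (if (i : ℕ) < t then 0 else μ k i) =
        ∑ i : Fin n, (if (i : ℕ) < t then 0 else lam i) :=
      Finset.sum_congr rfl fun i _ => by
        split_ifs with h
        · rfl
        · exact htail i (by omega)
    omega
end

section
/- Under the conditions of Claim A, for each k with 0 ≤ k ≤ N (where μ^(0),...,μ^(N) is the chain of partitions built by the northmost-box-adding rule from λ), the coefficient a_{λ,μ^(k)} is nonzero; equivalently, there exists a skew tableau of shape μ^(k)/λ that is strictly increasing along rows and columns, with every entry in row r at most r − 1. -/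
open Finset

/-- For every `k`, the coefficient `a_{λ,μ^(k)}` is nonzero: there is a row- and column-strictly
increasing skew tableau of shape `μ^(k)/λ` with every entry in (1-indexed) row `r` at most `r-1`. -/
theorem flagged_tableau_exists {n N : ℕ} (lam : Fin n → ℕ) (hlam : Antitone lam)
    (μ : Fin (N + 1) → Fin n → ℕ) (h0 : μ 0 = lam)
    (hchain : ∀ k : Fin N, NorthStep lam (μ k.castSucc) (μ k.succ)) :
    ∀ k : Fin (N + 1), ∃ T : Fin n → ℕ → ℕ, IsFlaggedTableau lam (μ k) T := by
  -- Invariant: μ k is antitone, lam ≤ μ k, and μ k i ≤ lam i + i.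
  have inv : ∀ k : Fin (N + 1),
      Antitone (μ k) ∧ (∀ i, lam i ≤ μ k i) ∧ (∀ i : Fin n, μ k i ≤ lam i + (i : ℕ)) := by
    intro k
    induction k using Fin.induction with
    | zero =>
      rw [h0]
      exact ⟨hlam, fun i => le_refl _, fun i => Nat.le_add_right _ _⟩
    | succ k ih =>
      obtain ⟨hanti, hle, hub⟩ := ih
      obtain ⟨ρ, ⟨hadd, hmono⟩, _, heq⟩ := hchain k
      rw [heq]
      refine ⟨hmono, fun i => ?_, fun i => ?_⟩
      · rcases eq_or_ne i ρ with rfl | h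
        · rw [Function.update_self]; exact le_trans (hle i) (Nat.le_succ _)
        · rw [Function.update_of_ne h]; exact hle i
      · rcases eq_or_ne i ρ with rfl | h
        · rw [Function.update_self]; omega
        · rw [Function.update_of_ne h]; exact hub i
  intro k
  obtain ⟨hanti, hle, hub⟩ := inv k
  set mu := μ k with hmu
  refine ⟨fun r c => c + (r : ℕ) + 1 - mu r, hle, ?_, ?_, ?_⟩
  · intro r c h1 h2
    have := hub r
    dsimp only
    omega
  · intro r c c' h1 h2 h3
    have := hub r
    dsimp only
    omega
  · intro r r' hrr' c h1 h2 h3 h4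
    have h5 := hub r
    have h6 := hub r'
    have h7 : mu r' ≤ mu r := hanti hrr'.le
    have h8 : (r : ℕ) < (r' : ℕ) := hrr'
    dsimp only
    omega
end

section
/- Let μ^(0),...,μ^(N) be partitions with |μ^(k)| = |μ^(0)| + k such that every partition μ of size |μ^(0)| + k appearing with nonzero coefficient in the Schur expansion of the degree-(|μ^(0)|+k) component satisfies μ ≤_D μ^(k), and μ^(k) itself appears. Then the Newton polytope of that homogeneous component equals the permutahedron P_{μ^(k)}, and the component has saturated Newton polytope. -/
open Finset

namespace SNPAux

lemma strictMono_le' {t : ℕ} {f : Fin t → ℕ} (hf : StrictMono f) (j : Fin t) : (j : ℕ) ≤ f j := by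
  induction' hv : (j : ℕ) with v ih generalizing j
  · exact Nat.zero_le _
  · have hlt : v < t := by omega
    have h1 : (⟨v, hlt⟩ : Fin t) < j := by simp [Fin.lt_def, hv]
    have h2 := hf h1
    have h3 := ih ⟨v, hlt⟩ rfl
    have h3' : v ≤ f ⟨v, hlt⟩ := h3
    omega

lemma card_filter_lt {n : ℕ} (t : ℕ) :
    ((univ : Finset (Fin n)).filter (fun i : Fin n => (i : ℕ) < t)).card = min t n := by
  have h : ((univ : Finset (Fin n)).filter (fun i : Fin n => (i : ℕ) < t)).image Fin.val
      = Finset.range (min t n) := by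
    ext y; simp [Fin.exists_iff]
  calc ((univ : Finset (Fin n)).filter (fun i : Fin n => (i : ℕ) < t)).card
      = (((univ : Finset (Fin n)).filter (fun i : Fin n => (i : ℕ) < t)).image Fin.val).card :=
        (Finset.card_image_of_injective _ Fin.val_injective).symm
    _ = min t n := by rw [h, Finset.card_range]

lemma sum_le_initial {M : Type*} [AddCommMonoid M] [PartialOrder M] [IsOrderedAddMonoid M] {n : ℕ} (u : Fin n → M)
    (hu : Antitone u) (S : Finset (Fin n)) :
    ∑ i ∈ S, u i ≤ ∑ i ∈ univ.filter (fun i : Fin n => (i : ℕ) < S.card), u i := by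
  classical
  set t := S.card with ht
  have htn : t ≤ n := by simpa using Finset.card_le_card (Finset.subset_univ S)
  have e := S.orderIsoOfFin ht.symm
  have h1 : ∑ i ∈ S, u i = ∑ j : Fin t, u (e j : Fin n) := by
    rw [← Finset.sum_coe_sort S u]
    exact (Equiv.sum_comp e.toEquiv (fun x => u (x : Fin n))).symm
  have h2 : ∑ i ∈ univ.filter (fun i : Fin n => (i : ℕ) < t), u i
      = ∑ j : Fin t, u (Fin.castLE htn j) := by
    have himg : (univ : Finset (Fin t)).image (Fin.castLE htn)
        = univ.filter (fun i : Fin n => (i : ℕ) < t) := by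
      ext i
      simp only [Finset.mem_image, Finset.mem_univ, true_and, Finset.mem_filter]
      constructor
      · rintro ⟨j, rfl⟩; simpa using j.2
      · intro hi; exact ⟨⟨(i : ℕ), hi⟩, by simp [Fin.ext_iff]⟩
    rw [← himg, Finset.sum_image (fun a _ b _ h => Fin.castLE_injective htn h)]
  rw [h1, h2]
  apply Finset.sum_le_sum
  intro j _
  apply hu
  have : StrictMono (fun j : Fin t => ((e j : Fin n) : ℕ)) := by
    intro a b hab
    have := e.strictMono hab
    exact this
  have := strictMono_le' this j
  simp only [Fin.le_def, Fin.coe_castLE]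
  exact le_trans (le_of_eq rfl) this

lemma psum_eq_filter {n : ℕ} (v : Fin n → ℝ) (t : ℕ) :
    psum v t = ∑ i ∈ univ.filter (fun i : Fin n => (i : ℕ) < t), v i := by
  rw [psum, Finset.sum_filter]

lemma npsum_eq_filter {n : ℕ} (v : Fin n → ℕ) (t : ℕ) :
    npsum v t = ∑ i ∈ univ.filter (fun i : Fin n => (i : ℕ) < t), v i := by
  rw [npsum, Finset.sum_filter]

lemma psum_total {n : ℕ} (v : Fin n → ℝ) {t : ℕ} (h : n ≤ t) : psum v t = ∑ i, v i := by
  rw [psum]; apply Finset.sum_congr rfl; intro i _; rw [if_pos (lt_of_lt_of_le i.2 h)]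

lemma npsum_total {n : ℕ} (v : Fin n → ℕ) {t : ℕ} (h : n ≤ t) : npsum v t = ∑ i, v i := by
  rw [npsum]; apply Finset.sum_congr rfl; intro i _; rw [if_pos (lt_of_lt_of_le i.2 h)]

lemma npsum_mono {n : ℕ} (v : Fin n → ℕ) {t t' : ℕ} (h : t ≤ t') : npsum v t ≤ npsum v t' := by
  apply Finset.sum_le_sum; intro i _
  by_cases hi : (i : ℕ) < t
  · rw [if_pos hi, if_pos (lt_of_lt_of_le hi h)]
  · rw [if_neg hi]; positivity

lemma npsum_cast {n : ℕ} (v : Fin n → ℕ) (t : ℕ) :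
    psum (fun i => (v i : ℝ)) t = (npsum v t : ℝ) := by
  rw [psum, npsum, Nat.cast_sum]
  apply Finset.sum_congr rfl; intro i _
  split <;> simp

noncomputable def dperm {n : ℕ} (v : Fin n → ℝ) : Equiv.Perm (Fin n) :=
  Fin.revPerm.trans (Tuple.sort v)

lemma decSort_eq {n : ℕ} (v : Fin n → ℝ) : decSort v = v ∘ (dperm v) := rfl

lemma antitone_decSort {n : ℕ} (v : Fin n → ℝ) : Antitone (decSort v) := by
  intro i j hij
  have := Tuple.monotone_sort v (a := j.rev) (b := i.rev) (by rwa [Fin.rev_le_rev])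
  exact this

lemma sum_decSort {n : ℕ} (v : Fin n → ℝ) : ∑ i, decSort v i = ∑ i, v i := by
  rw [decSort_eq]
  exact Equiv.sum_comp (dperm v) v

lemma psum_decSort_achieved {n : ℕ} (v : Fin n → ℝ) (t : ℕ) :
    ∃ S : Finset (Fin n), S.card = min t n ∧ psum (decSort v) t = ∑ i ∈ S, v i := by
  classical
  refine ⟨(univ.filter (fun i : Fin n => (i : ℕ) < t)).image (dperm v), ?_, ?_⟩
  · rw [Finset.card_image_of_injective _ (dperm v).injective, card_filter_lt]
  · rw [psum_eq_filter, Finset.sum_image (by intro a _ b _ h; exact (dperm v).injective h)]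
    rfl

lemma sum_le_psum_decSort {n : ℕ} (v : Fin n → ℝ) (S : Finset (Fin n)) :
    ∑ i ∈ S, v i ≤ psum (decSort v) S.card := by
  classical
  have h1 : ∑ i ∈ S, v i = ∑ j ∈ S.image (dperm v).symm, decSort v j := by
    rw [Finset.sum_image (by intro a _ b _ h; exact (dperm v).symm.injective h)]
    apply Finset.sum_congr rfl; intro i _
    rw [decSort_eq]; simp
  rw [h1, psum_eq_filter]
  have hc : (S.image (dperm v).symm).card = S.card :=
    Finset.card_image_of_injective _ (dperm v).symm.injective
  rw [← hc]
  exact sum_le_initial _ (antitone_decSort v) _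

lemma psum_decSort_antitone {n : ℕ} {w : Fin n → ℝ} (hw : Antitone w) (t : ℕ) :
    psum (decSort w) t = psum w t := by
  have hmin : ∀ v : Fin n → ℝ, psum v (min t n) = psum v t := by
    intro v
    rcases le_total t n with h | h
    · rw [min_eq_left h]
    · rw [min_eq_right h, psum_total v h, psum_total v le_rfl]
  apply le_antisymm
  · obtain ⟨S, hS, hEq⟩ := psum_decSort_achieved w t
    rw [hEq, ← hmin w]
    calc ∑ i ∈ S, w i ≤ _ := sum_le_initial w hw S
    _ = psum w (min t n) := by rw [psum_eq_filter, hS]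
  · rw [← hmin (decSort w), psum_eq_filter w t]
    calc ∑ i ∈ univ.filter (fun i : Fin n => (i:ℕ) < t), w i
        ≤ psum (decSort w) (univ.filter (fun i : Fin n => (i:ℕ) < t)).card :=
          sum_le_psum_decSort w _
    _ = psum (decSort w) (min t n) := by rw [card_filter_lt]

lemma majorizes_of_natdom {n : ℕ} {b a : Fin n → ℕ} (hb : Antitone b)
    (hdom : ∀ S : Finset (Fin n), ∑ i ∈ S, a i ≤ npsum b S.card)
    (hsum : ∑ i, a i = ∑ i, b i) :
    Majorizes (fun i => (b i : ℝ)) (fun i => (a i : ℝ)) := by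
  have hbcast : Antitone (fun i => (b i : ℝ)) := fun i j hij => Nat.cast_le.mpr (hb hij)
  constructor
  · intro t
    obtain ⟨S, hS, hEq⟩ := psum_decSort_achieved (fun i => (a i : ℝ)) t
    rw [hEq, psum_decSort_antitone hbcast, npsum_cast]
    have h1 : ∑ i ∈ S, ((a i : ℝ)) = ((∑ i ∈ S, a i : ℕ) : ℝ) := by push_cast; ring
    rw [h1, Nat.cast_le]
    calc ∑ i ∈ S, a i ≤ npsum b S.card := hdom S
    _ = npsum b (min t n) := by rw [hS]
    _ ≤ npsum b t := npsum_mono b (min_le_left _ _)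
  · push_cast; exact_mod_cast congrArg (Nat.cast : ℕ → ℝ) hsum

lemma abel_sum {n : ℕ} (c x : Fin n → ℝ) :
    ∑ i, c i * x i =
      ∑ t ∈ Finset.range n,
        ((if h : t < n then c ⟨t, h⟩ else 0) - (if h : t + 1 < n then c ⟨t + 1, h⟩ else 0))
          * psum x (t + 1) := by
  classical
  set c' : ℕ → ℝ := fun t => if h : t < n then c ⟨t, h⟩ else 0 with hc'
  have key : ∀ i : Fin n, ∑ t ∈ (Finset.range n).filter (fun t => (i : ℕ) ≤ t),
      (c' t - c' (t + 1)) = c i := by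
    intro i
    have hIco : (Finset.range n).filter (fun t => (i : ℕ) ≤ t) = Finset.Ico (i : ℕ) n := by
      ext t; simp [Finset.mem_Ico]; tauto
    rw [hIco]
    have h1 : ∑ t ∈ Finset.Ico (i : ℕ) n, (c' t - c' (t + 1))
        = ∑ t ∈ Finset.range (n - (i : ℕ)), (c' ((i : ℕ) + t) - c' ((i : ℕ) + t + 1)) := by
      rw [Finset.sum_Ico_eq_sum_range]
    rw [h1]
    have h2 := Finset.sum_range_sub' (fun t => c' ((i : ℕ) + t)) (n - (i : ℕ))
    have h3 : ∀ t, (i : ℕ) + t + 1 = (i : ℕ) + (t + 1) := by omega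
    calc ∑ t ∈ Finset.range (n - (i : ℕ)), (c' ((i : ℕ) + t) - c' ((i : ℕ) + t + 1))
        = ∑ t ∈ Finset.range (n - (i : ℕ)), (c' ((i : ℕ) + t) - c' ((i : ℕ) + (t + 1))) := by
          apply Finset.sum_congr rfl; intro t _; rw [h3]
      _ = c' ((i : ℕ) + 0) - c' ((i : ℕ) + (n - (i : ℕ))) := h2
      _ = c i := by
          have hin : (i : ℕ) + (n - (i : ℕ)) = n := by omega
          rw [hin]
          simp [hc', i.2, Fin.eta]
  calc ∑ i, c i * x i
      = ∑ i : Fin n, (∑ t ∈ (Finset.range n).filter (fun t => (i : ℕ) ≤ t),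
          (c' t - c' (t + 1))) * x i := by
        apply Finset.sum_congr rfl; intro i _; rw [key]
    _ = ∑ i : Fin n, ∑ t ∈ Finset.range n,
          (if (i : ℕ) ≤ t then (c' t - c' (t + 1)) * x i else 0) := by
        apply Finset.sum_congr rfl; intro i _
        rw [Finset.sum_filter, Finset.sum_mul]
        apply Finset.sum_congr rfl; intro t _
        split <;> simp
    _ = ∑ t ∈ Finset.range n, ∑ i : Fin n,
          (if (i : ℕ) ≤ t then (c' t - c' (t + 1)) * x i else 0) := Finset.sum_comm
    _ = _ := by
        apply Finset.sum_congr rfl; intro t _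
        rw [psum, Finset.mul_sum]
        apply Finset.sum_congr rfl; intro i _
        simp only [hc']
        by_cases hit : (i : ℕ) ≤ t
        · rw [if_pos hit, if_pos (by omega)]
        · rw [if_neg hit, if_neg (by omega), mul_zero]

lemma monovary_of_antitone {n : ℕ} (f g : Fin n → ℝ) (hf : Antitone f) (hg : Antitone g) :
    Monovary f g := by
  intro i j hgij
  rcases le_total i j with h | h
  · exact absurd (hg h) (not_le.mpr hgij)
  · exact hf h

lemma sum_mul_le_of_majorizes {n : ℕ} {w v : Fin n → ℝ} (h : Majorizes w v) (c : Fin n → ℝ)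
    (hc : Antitone c) :
    ∑ i, c i * decSort v i ≤ ∑ i, c i * decSort w i := by
  rw [abel_sum c (decSort v), abel_sum c (decSort w)]
  apply Finset.sum_le_sum
  intro t ht
  simp only [Finset.mem_range] at ht
  rcases lt_or_ge (t + 1) n with h1 | h1
  · apply mul_le_mul_of_nonneg_left (h.1 (t + 1))
    have := hc (show (⟨t, ht⟩ : Fin n) ≤ ⟨t + 1, h1⟩ by simp [Fin.le_def])
    simp only [dif_pos ht, dif_pos h1]
    linarith
  · have hv : psum (decSort v) (t + 1) = psum (decSort w) (t + 1) := by
      rw [psum_total _ h1, psum_total _ h1, sum_decSort, sum_decSort, h.2]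
    rw [hv]

theorem mem_permutahedron_of_majorizes {n : ℕ} {w v : Fin n → ℝ} (h : Majorizes w v) :
    v ∈ permutahedron w := by
  classical
  by_contra hv
  have horb : ({x | ∃ σ : Equiv.Perm (Fin n), x = w ∘ σ} : Set (Fin n → ℝ)).Finite := by
    have : ({x | ∃ σ : Equiv.Perm (Fin n), x = w ∘ σ} : Set (Fin n → ℝ))
        = Set.range (fun σ : Equiv.Perm (Fin n) => w ∘ σ) := by
      ext x; simp [Set.mem_setOf_eq, eq_comm]
    rw [this]
    exact Set.finite_range _
  have hcl : IsClosed (permutahedron w) := horb.isClosed_convexHull ℝ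
  have hcv : Convex ℝ (permutahedron w) := convex_convexHull ℝ _
  obtain ⟨f, u, hfu, hu⟩ := geometric_hahn_banach_closed_point hcv hcl hv
  set c : Fin n → ℝ := fun i => f (fun j => if i = j then 1 else 0) with hcdef
  have hrep : ∀ x : Fin n → ℝ, f x = ∑ i, c i * x i := by
    intro x
    have hx : x = ∑ i, x i • (fun j => if i = j then (1 : ℝ) else 0) := pi_eq_sum_univ x
    calc f x = f (∑ i, x i • (fun j => if i = j then (1 : ℝ) else 0)) := by rw [← hx]
      _ = ∑ i, x i • f (fun j => if i = j then (1 : ℝ) else 0) := by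
          rw [map_sum]; apply Finset.sum_congr rfl; intro i _; rw [f.map_smul]
      _ = ∑ i, c i * x i := by apply Finset.sum_congr rfl; intro i _; rw [smul_eq_mul]; ring
  set ρ := dperm c with hρ
  -- step 1 : f v = ∑ decSort c i * (v ∘ ρ) i
  have step1 : f v = ∑ i, decSort c i * v (ρ i) := by
    rw [hrep]
    rw [← Equiv.sum_comp ρ (fun i => c i * v i)]
    rfl
  -- step 2 : rearrangement
  have step2 : ∑ i, decSort c i * v (ρ i) ≤ ∑ i, decSort c i * decSort v i := by
    have hmv : Monovary (decSort c) (decSort v) :=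
      monovary_of_antitone _ _ (antitone_decSort c) (antitone_decSort v)
    have hπ : ∀ i, v (ρ i) = decSort v ((ρ.trans (dperm v).symm) i) := by
      intro i; rw [decSort_eq]; simp
    calc ∑ i, decSort c i * v (ρ i)
        = ∑ i, decSort c i * decSort v ((ρ.trans (dperm v).symm) i) := by
          apply Finset.sum_congr rfl; intro i _; rw [hπ]
      _ ≤ ∑ i, decSort c i * decSort v i := hmv.sum_mul_comp_perm_le_sum_mul
  -- step 3 : Abel
  have step3 : ∑ i, decSort c i * decSort v i ≤ ∑ i, decSort c i * decSort w i :=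
    sum_mul_le_of_majorizes h (decSort c) (antitone_decSort c)
  -- step 4 : back to a vertex
  have step4 : ∑ i, decSort c i * decSort w i = f (w ∘ (ρ.symm.trans (dperm w))) := by
    rw [hrep]
    rw [← Equiv.sum_comp ρ (fun j => c j * (w ∘ (ρ.symm.trans (dperm w))) j)]
    apply Finset.sum_congr rfl; intro i _
    simp only [Function.comp_apply, Equiv.trans_apply, Equiv.symm_apply_apply]
    rw [decSort_eq, decSort_eq]
    simp [mul_comm]
    exact Or.inl rfl
  have hmem : (w ∘ (ρ.symm.trans (dperm w))) ∈ permutahedron w :=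
    subset_convexHull ℝ _ ⟨ρ.symm.trans (dperm w), rfl⟩
  have hlt := hfu _ hmem
  have hfv : f v ≤ f (w ∘ (ρ.symm.trans (dperm w))) := by
    rw [step1, ← step4]
    exact le_trans step2 step3
  linarith

lemma sum_linear {n : ℕ} (S : Finset (Fin n)) :
    IsLinearMap ℝ (fun x : Fin n → ℝ => ∑ i ∈ S, x i) := by
  constructor
  · intro x y; simp [Finset.sum_add_distrib]
  · intro c x; simp [Finset.mul_sum]

lemma mem_permutahedron_sum_le {n : ℕ} (w : Fin n → ℝ) {x : Fin n → ℝ}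
    (hx : x ∈ permutahedron w) (S : Finset (Fin n)) :
    ∑ i ∈ S, x i ≤ psum (decSort w) S.card := by
  have hsub : permutahedron w ⊆ {x | ∑ i ∈ S, x i ≤ psum (decSort w) S.card} := by
    apply convexHull_min
    · rintro y ⟨σ, rfl⟩
      simp only [Set.mem_setOf_eq, Function.comp_apply]
      have himg : ∑ i ∈ S, w (σ i) = ∑ j ∈ S.image σ, w j := by
        rw [Finset.sum_image (fun a _ b _ hab => σ.injective hab)]
      rw [himg]
      have hcard : (S.image σ).card = S.card := Finset.card_image_of_injective _ σ.injective
      rw [← hcard]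
      exact sum_le_psum_decSort w _
    · exact convex_halfSpace_le (sum_linear S) _
  exact hsub hx

lemma mem_permutahedron_sum_eq {n : ℕ} (w : Fin n → ℝ) {x : Fin n → ℝ}
    (hx : x ∈ permutahedron w) : ∑ i, x i = ∑ i, w i := by
  have hsub : permutahedron w ⊆ {x | ∑ i, x i = ∑ i, w i} := by
    apply convexHull_min
    · rintro y ⟨σ, rfl⟩
      simp only [Set.mem_setOf_eq, Function.comp_apply]
      exact Equiv.sum_comp σ w
    · exact convex_hyperplane (sum_linear univ) _
  exact hsub hx

end SNPAux

namespace SNPAux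

lemma ncard_boxes {n : ℕ} (m : Fin n → ℕ) (P : Fin n × ℕ → Prop) [DecidablePred P] :
    {p : Fin n × ℕ | p.2 < m p.1 ∧ P p}.ncard
      = ((univ ×ˢ Finset.range (∑ i, m i)).filter (fun p => p.2 < m p.1 ∧ P p)).card := by
  rw [← Set.ncard_coe_finset]
  congr 1
  ext p
  simp only [Finset.coe_filter, Finset.mem_product, Finset.mem_univ, Finset.mem_range,
    Set.mem_setOf_eq, true_and]
  constructor
  · rintro ⟨h1, h2⟩
    exact ⟨lt_of_lt_of_le h1 (Finset.single_le_sum (fun i _ => Nat.zero_le (m i))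
      (Finset.mem_univ p.1)), h1, h2⟩
  · tauto

lemma card_boxes_row {n N : ℕ} (m : Fin n → ℕ) (hN : ∀ r, m r ≤ N) (Q : Fin n × ℕ → Prop) [DecidablePred Q] :
    ((univ ×ˢ Finset.range N).filter (fun p => p.2 < m p.1 ∧ Q p)).card
      = ∑ r : Fin n, ((Finset.range (m r)).filter (fun c => Q (r, c))).card := by
  rw [Finset.card_eq_sum_card_fiberwise (f := Prod.fst) (t := univ) (fun x _ => Finset.mem_univ _)]
  apply Finset.sum_congr rfl
  intro r _
  refine Finset.card_bij' (fun p _ => p.2) (fun c _ => (r, c)) ?_ ?_ ?_ ?_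
  · rintro ⟨p1, p2⟩ hp
    simp only [Finset.mem_filter, Finset.mem_product, Finset.mem_univ, Finset.mem_range,
      true_and] at hp ⊢
    obtain ⟨⟨_, h1, h2⟩, h3⟩ := hp
    subst h3
    exact ⟨h1, h2⟩
  · intro c hc
    obtain ⟨hc1, hc2⟩ := Finset.mem_filter.mp hc
    refine Finset.mem_filter.mpr ⟨Finset.mem_filter.mpr ⟨?_, ?_, hc2⟩, rfl⟩
    · exact Finset.mem_product.mpr ⟨Finset.mem_univ _,
        Finset.mem_range.mpr (lt_of_lt_of_le (Finset.mem_range.mp hc1) (hN r))⟩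
    · exact Finset.mem_range.mp hc1
  · rintro ⟨p1, p2⟩ hp
    obtain ⟨-, h2⟩ := Finset.mem_filter.mp hp
    simp only at h2
    subst h2
    rfl
  · intro c _; rfl

lemma card_boxes_col {n N : ℕ} (m : Fin n → ℕ) (hN : ∀ r, m r ≤ N) (Q : Fin n × ℕ → Prop) [DecidablePred Q] :
    ((univ ×ˢ Finset.range N).filter (fun p => p.2 < m p.1 ∧ Q p)).card
      = ∑ c ∈ Finset.range N, (univ.filter (fun r : Fin n => c < m r ∧ Q (r, c))).card := by
  rw [Finset.card_eq_sum_card_fiberwise (f := Prod.snd) (t := Finset.range N) ?memb]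
  case memb =>
    intro p hp
    simp only [Finset.mem_coe, Finset.mem_filter, Finset.mem_product, Finset.mem_univ, Finset.mem_range,
      true_and] at hp
    exact Finset.mem_range.mpr hp.1
  apply Finset.sum_congr rfl
  intro c hc
  refine Finset.card_bij' (fun p _ => p.1) (fun r _ => (r, c)) ?_ ?_ ?_ ?_
  · rintro ⟨p1, p2⟩ hp
    simp only [Finset.mem_filter, Finset.mem_product, Finset.mem_univ, Finset.mem_range,
      true_and] at hp ⊢
    obtain ⟨⟨_, h1, h2⟩, h3⟩ := hp
    subst h3
    exact ⟨h1, h2⟩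
  · intro r hr
    obtain ⟨-, hr1, hr2⟩ := Finset.mem_filter.mp hr
    refine Finset.mem_filter.mpr ⟨Finset.mem_filter.mpr ⟨?_, hr1, hr2⟩, rfl⟩
    exact Finset.mem_product.mpr ⟨Finset.mem_univ _, hc⟩
  · rintro ⟨p1, p2⟩ hp
    obtain ⟨-, h2⟩ := Finset.mem_filter.mp hp
    simp only at h2
    subst h2
    rfl
  · intro r _; rfl

lemma filter_range_lt {N a : ℕ} (h : a ≤ N) :
    (Finset.range N).filter (fun c => c < a) = Finset.range a := by
  ext c; simp only [Finset.mem_filter, Finset.mem_range]; omega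

lemma downset_eq_initial {n : ℕ} (H : Finset (Fin n))
    (hd : ∀ r r' : Fin n, r' ≤ r → r ∈ H → r' ∈ H) :
    H = univ.filter (fun r : Fin n => (r : ℕ) < H.card) := by
  ext r
  simp only [Finset.mem_filter, Finset.mem_univ, true_and]
  constructor
  · intro hr
    have hsub : univ.filter (fun r' : Fin n => (r' : ℕ) < (r : ℕ) + 1) ⊆ H := by
      intro r' hr'
      simp only [Finset.mem_filter, Finset.mem_univ, true_and] at hr'
      exact hd r r' (Fin.le_def.mpr (by omega)) hr
    have h1 := Finset.card_le_card hsub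
    rw [card_filter_lt] at h1
    have h2 := r.2
    omega
  · intro hr
    by_contra hrH
    have hsub : H ⊆ univ.filter (fun r' : Fin n => (r' : ℕ) < (r : ℕ)) := by
      intro h hh
      simp only [Finset.mem_filter, Finset.mem_univ, true_and]
      by_contra hge
      push_neg at hge
      exact hrH (hd h r (Fin.le_def.mpr hge) hh)
    have h1 := Finset.card_le_card hsub
    rw [card_filter_lt] at h1
    omega


lemma fin_sum_empty {f : Fin 0 → ℕ} : ∑ i, f i = 0 := by simp

lemma mem_boxfilter_iff {n N : ℕ} {m : Fin n → ℕ} {Q : Fin n × ℕ → Prop} [DecidablePred Q] {p : Fin n × ℕ} :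
    p ∈ (univ ×ˢ Finset.range N).filter (fun p => p.2 < m p.1 ∧ Q p) ↔
      p.2 < N ∧ p.2 < m p.1 ∧ Q p := by
  simp only [Finset.mem_filter, Finset.mem_product, Finset.mem_univ, Finset.mem_range, true_and]

lemma mem_boxfilter_iff' {n N : ℕ} {m : Fin n → ℕ} {p : Fin n × ℕ} :
    p ∈ (univ ×ˢ Finset.range N).filter (fun p => p.2 < m p.1) ↔
      p.2 < N ∧ p.2 < m p.1 := by
  simp only [Finset.mem_filter, Finset.mem_product, Finset.mem_univ, Finset.mem_range, true_and]

lemma kostka_witness_sum {n : ℕ} {m α : Fin n → ℕ} {T : Fin n → ℕ → ℕ}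
    (hT : IsSSYT m T)
    (hw : ∀ i : Fin n, α i = Set.ncard {p : Fin n × ℕ | p.2 < m p.1 ∧ T p.1 p.2 = (i : ℕ) + 1}) :
    ∑ i, α i = ∑ i, m i := by
  rcases Nat.eq_zero_or_pos n with hn | hn
  · subst hn; simp
  have hN : ∀ r, m r ≤ ∑ i, m i := fun r =>
    Finset.single_le_sum (fun i _ => Nat.zero_le (m i)) (Finset.mem_univ r)
  have hfv : ∀ p : Fin n × ℕ, min (T p.1 p.2 - 1) (n - 1) < n := fun p => by omega
  have hBcard : ((univ ×ˢ Finset.range (∑ i, m i)).filter (fun p => p.2 < m p.1)).card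
      = ∑ i, m i := by
    have h := card_boxes_row m hN (fun _ => True)
    simp only [and_true, Finset.filter_true, Finset.card_range] at h
    exact h
  rw [Finset.card_eq_sum_card_fiberwise
    (f := fun p : Fin n × ℕ => (⟨min (T p.1 p.2 - 1) (n - 1), hfv p⟩ : Fin n))
    (t := univ) (fun x _ => Finset.mem_univ _)] at hBcard
  rw [← hBcard]
  refine Finset.sum_congr rfl (fun i _ => ?_)
  rw [hw i, ncard_boxes]
  congr 1
  ext p
  constructor
  · intro hp
    obtain ⟨h1, h2, h3⟩ := mem_boxfilter_iff.mp hp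
    obtain ⟨hT1, hT2⟩ := hT.1 p.1 p.2 h2
    refine Finset.mem_filter.mpr ⟨mem_boxfilter_iff'.mpr ⟨h1, h2⟩, ?_⟩
    have hi := i.2
    exact Fin.ext (by simp; omega)
  · intro hp
    obtain ⟨hp1, h3⟩ := Finset.mem_filter.mp hp
    obtain ⟨h1, h2⟩ := mem_boxfilter_iff'.mp hp1
    obtain ⟨hT1, hT2⟩ := hT.1 p.1 p.2 h2
    apply mem_boxfilter_iff.mpr
    have h3' : min (T p.1 p.2 - 1) (n - 1) = (i : ℕ) := congrArg Fin.val h3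
    exact ⟨h1, h2, by omega⟩

set_option maxHeartbeats 2000000 in
lemma kostka_witness_dom {n : ℕ} {m α : Fin n → ℕ} {T : Fin n → ℕ → ℕ}
    (hm : Antitone m) (hT : IsSSYT m T)
    (hw : ∀ i : Fin n, α i = Set.ncard {p : Fin n × ℕ | p.2 < m p.1 ∧ T p.1 p.2 = (i : ℕ) + 1})
    (S : Finset (Fin n)) :
    ∑ i ∈ S, α i ≤ npsum m S.card := by
  rcases Nat.eq_zero_or_pos n with hn | hn
  · subst hn
    have : S = ∅ := Finset.eq_empty_of_isEmpty S
    subst this; simp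
  have hN : ∀ r, m r ≤ ∑ i, m i := fun r =>
    Finset.single_le_sum (fun i _ => Nat.zero_le (m i)) (Finset.mem_univ r)
  have hfv : ∀ p : Fin n × ℕ, min (T p.1 p.2 - 1) (n - 1) < n := fun p => by omega
  -- claim 1
  have claim1 : ∑ i ∈ S, α i = ((univ ×ˢ Finset.range (∑ i, m i)).filter
      (fun p => p.2 < m p.1 ∧ ∃ i ∈ S, T p.1 p.2 = (i : ℕ) + 1)).card := by
    have hmemb : ∀ p ∈ (univ ×ˢ Finset.range (∑ i, m i)).filter
        (fun p => p.2 < m p.1 ∧ ∃ i ∈ S, T p.1 p.2 = (i : ℕ) + 1),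
        (⟨min (T p.1 p.2 - 1) (n - 1), hfv p⟩ : Fin n) ∈ S := by
      intro p hp
      obtain ⟨h1, h2, i, hi, hTi⟩ := mem_boxfilter_iff.mp hp
      have hieq : (⟨min (T p.1 p.2 - 1) (n - 1), hfv p⟩ : Fin n) = i := by
        have := i.2
        exact Fin.ext (by simp; omega)
      rwa [hieq]
    rw [Finset.card_eq_sum_card_fiberwise hmemb]
    refine Finset.sum_congr rfl (fun i hi => ?_)
    rw [hw i, ncard_boxes]
    congr 1
    ext p
    constructor
    · intro hp
      obtain ⟨h1, h2, h3⟩ := mem_boxfilter_iff.mp hp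
      obtain ⟨hT1, hT2⟩ := hT.1 p.1 p.2 h2
      refine Finset.mem_filter.mpr ⟨mem_boxfilter_iff.mpr ⟨h1, h2, ⟨i, hi, h3⟩⟩, ?_⟩
      have := i.2
      exact Fin.ext (by simp; omega)
    · intro hp
      obtain ⟨hp1, h3⟩ := Finset.mem_filter.mp hp
      obtain ⟨h1, h2, -⟩ := mem_boxfilter_iff.mp hp1
      obtain ⟨hT1, hT2⟩ := hT.1 p.1 p.2 h2
      have h3' : min (T p.1 p.2 - 1) (n - 1) = (i : ℕ) := congrArg Fin.val h3
      exact mem_boxfilter_iff.mpr ⟨h1, h2, by omega⟩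
  -- claim 3 : per-column bound
  have claim3 : ∀ c : ℕ, (univ.filter (fun r : Fin n =>
        c < m r ∧ ∃ i ∈ S, T r c = (i : ℕ) + 1)).card
      ≤ (univ.filter (fun r : Fin n => (r : ℕ) < S.card ∧ c < m r)).card := by
    intro c
    have hgn : (univ.filter (fun r : Fin n => c < m r)).card ≤ n := by
      calc (univ.filter (fun r : Fin n => c < m r)).card
          ≤ (univ : Finset (Fin n)).card := Finset.card_le_card (Finset.subset_univ _)
        _ = n := by simp
    have hdown : univ.filter (fun r : Fin n => c < m r)
        = univ.filter (fun r : Fin n =>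
            (r : ℕ) < (univ.filter (fun r : Fin n => c < m r)).card) := by
      apply downset_eq_initial
      intro r r' hle hr
      simp only [Finset.mem_filter, Finset.mem_univ, true_and] at hr ⊢
      exact lt_of_lt_of_le hr (hm hle)
    have hFG : univ.filter (fun r : Fin n => c < m r ∧ ∃ i ∈ S, T r c = (i : ℕ) + 1)
        ⊆ univ.filter (fun r : Fin n => c < m r) := by
      intro r hr
      simp only [Finset.mem_filter, Finset.mem_univ, true_and] at hr ⊢
      exact hr.1
    have hFg := Finset.card_le_card hFG
    have hFt : (univ.filter (fun r : Fin n =>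
        c < m r ∧ ∃ i ∈ S, T r c = (i : ℕ) + 1)).card ≤ S.card := by
      have hle : (univ.filter (fun r : Fin n =>
          c < m r ∧ ∃ i ∈ S, T r c = (i : ℕ) + 1)).card
          ≤ (S.image (fun i : Fin n => (i : ℕ) + 1)).card := by
        apply Finset.card_le_card_of_injOn (fun r => T r c)
        · intro r hr
          simp only [Finset.mem_coe, Finset.mem_filter, Finset.mem_univ, true_and] at hr
          obtain ⟨h1, i, hi, hTi⟩ := hr
          exact Finset.mem_image.mpr ⟨i, hi, hTi.symm⟩
        · intro r hr r' hr' hEq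
          simp only [Finset.coe_filter, Finset.mem_univ, true_and, Set.mem_setOf_eq] at hr hr'
          rcases lt_trichotomy r r' with h | h | h
          · exact absurd hEq (ne_of_lt (hT.2.2 r r' h c hr'.1 hr.1))
          · exact h
          · exact absurd hEq.symm (ne_of_lt (hT.2.2 r' r h c hr.1 hr'.1))
      rwa [Finset.card_image_of_injective _
        (fun a b hab => Fin.val_injective (by omega : (a : ℕ) = b))] at hle
    have htarget : (univ.filter (fun r : Fin n => (r : ℕ) < S.card ∧ c < m r)).card
        = min S.card (univ.filter (fun r : Fin n => c < m r)).card := by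
      have heq : univ.filter (fun r : Fin n => (r : ℕ) < S.card ∧ c < m r)
          = univ.filter (fun r : Fin n =>
              (r : ℕ) < min S.card (univ.filter (fun r : Fin n => c < m r)).card) := by
        ext r
        simp only [Finset.mem_filter, Finset.mem_univ, true_and, lt_min_iff]
        constructor
        · rintro ⟨h1, h2⟩
          refine ⟨h1, ?_⟩
          have hmem : r ∈ univ.filter (fun r : Fin n => c < m r) := by
            simp only [Finset.mem_filter, Finset.mem_univ, true_and]; exact h2
          rw [hdown] at hmem
          simpa using hmem
        · rintro ⟨h1, h2⟩
          refine ⟨h1, ?_⟩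
          have hmem : r ∈ univ.filter (fun r : Fin n =>
              (r : ℕ) < (univ.filter (fun r : Fin n => c < m r)).card) := by
            simp only [Finset.mem_filter, Finset.mem_univ, true_and]; exact h2
          rw [← hdown] at hmem
          simpa using hmem
      rw [heq, card_filter_lt]
      omega
    rw [htarget]
    exact le_min hFt hFg
  -- claim 4
  have claim4 : ∑ c ∈ Finset.range (∑ i, m i),
      (univ.filter (fun r : Fin n => (r : ℕ) < S.card ∧ c < m r)).card = npsum m S.card := by
    calc ∑ c ∈ Finset.range (∑ i, m i),
        (univ.filter (fun r : Fin n => (r : ℕ) < S.card ∧ c < m r)).card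
        = ∑ c ∈ Finset.range (∑ i, m i), ∑ r : Fin n,
            if (r : ℕ) < S.card ∧ c < m r then 1 else 0 := by
          apply Finset.sum_congr rfl; intro c _; rw [Finset.card_filter]
      _ = ∑ r : Fin n, ∑ c ∈ Finset.range (∑ i, m i),
            if (r : ℕ) < S.card ∧ c < m r then 1 else 0 := Finset.sum_comm
      _ = npsum m S.card := by
          rw [npsum]
          apply Finset.sum_congr rfl
          intro r _
          by_cases hr : (r : ℕ) < S.card
          · have hcongr : ∀ c ∈ Finset.range (∑ i, m i),
                (if (r : ℕ) < S.card ∧ c < m r then 1 else 0) = if c < m r then 1 else 0 := by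
              intro c _; simp [hr]
            rw [Finset.sum_congr rfl hcongr, ← Finset.card_filter, filter_range_lt (hN r),
              Finset.card_range, if_pos hr]
          · simp [hr]
  calc ∑ i ∈ S, α i
      = ((univ ×ˢ Finset.range (∑ i, m i)).filter
          (fun p => p.2 < m p.1 ∧ ∃ i ∈ S, T p.1 p.2 = (i : ℕ) + 1)).card := claim1
    _ = ∑ c ∈ Finset.range (∑ i, m i), (univ.filter (fun r : Fin n =>
          c < m r ∧ ∃ i ∈ S, T r c = (i : ℕ) + 1)).card :=
        card_boxes_col m hN _
    _ ≤ ∑ c ∈ Finset.range (∑ i, m i),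
          (univ.filter (fun r : Fin n => (r : ℕ) < S.card ∧ c < m r)).card :=
        Finset.sum_le_sum (fun c _ => claim3 c)
    _ = npsum m S.card := claim4


lemma npsum_succ {n : ℕ} (m : Fin n → ℕ) {t : ℕ} (ht : t < n) :
    npsum m (t + 1) = npsum m t + m ⟨t, ht⟩ := by
  rw [npsum, npsum]
  have hsplit : ∀ i : Fin n, (if (i : ℕ) < t + 1 then m i else 0)
      = (if (i : ℕ) < t then m i else 0) + (if i = ⟨t, ht⟩ then m i else 0) := by
    intro i
    by_cases h2 : i = ⟨t, ht⟩
    · subst h2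
      simp
    · have hvt : (i : ℕ) ≠ t := fun h => h2 (Fin.ext h)
      rw [if_neg h2, add_zero]
      by_cases h1 : (i : ℕ) < t
      · rw [if_pos (by omega), if_pos h1]
      · rw [if_neg (by omega), if_neg h1]
  rw [Finset.sum_congr rfl (fun i _ => hsplit i), Finset.sum_add_distrib,
    Finset.sum_ite_eq' univ (⟨t, ht⟩ : Fin n) m]
  simp

lemma sum_filter_val {n t : ℕ} (ht : t ≤ n) (g : ℕ → ℕ) :
    ∑ i ∈ univ.filter (fun i : Fin n => (i : ℕ) < t), g (i : ℕ)
      = ∑ r ∈ Finset.range t, g r := by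
  have himg : (univ.filter (fun i : Fin n => (i : ℕ) < t)).image Fin.val = Finset.range t := by
    ext y
    simp only [Finset.mem_image, Finset.mem_filter, Finset.mem_univ, true_and, Finset.mem_range]
    constructor
    · rintro ⟨i, hi, rfl⟩; exact hi
    · intro hy; exact ⟨⟨y, by omega⟩, hy, rfl⟩
  calc ∑ i ∈ univ.filter (fun i : Fin n => (i : ℕ) < t), g (i : ℕ)
      = ∑ y ∈ (univ.filter (fun i : Fin n => (i : ℕ) < t)).image Fin.val, g y :=
        (Finset.sum_image (fun a _ b _ h => Fin.val_injective h)).symm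
    _ = ∑ r ∈ Finset.range t, g r := by rw [himg]

lemma tele_sum (g : ℕ → ℕ) (hg : ∀ s t : ℕ, s ≤ t → g t ≤ g s) (t : ℕ) :
    ∑ r ∈ Finset.range t, (g r - g (r + 1)) = g 0 - g t := by
  induction t with
  | zero => simp
  | succ t iht =>
      rw [Finset.sum_range_succ, iht]
      have h1 := hg 0 t (Nat.zero_le _)
      have h2 := hg t (t + 1) (Nat.le_succ _)
      omega

lemma ssyt_exists_aux {n : ℕ} (k : ℕ) :
    k ≤ n → ∀ m α : Fin n → ℕ, Antitone m →
    (∀ i : Fin n, k ≤ (i : ℕ) → α i = 0) →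
    (∑ i, α i = ∑ i, m i) →
    (∀ S : Finset (Fin n), ∑ i ∈ S, α i ≤ npsum m S.card) →
    ∃ T : Fin n → ℕ → ℕ, IsSSYT m T ∧ (∀ (r : Fin n) (c : ℕ), m r ≤ c → T r c = 0) ∧
      (∀ r : Fin n, ∀ c, c < m r → T r c ≤ k) ∧
      (∀ i : Fin n, α i = Set.ncard {p : Fin n × ℕ | p.2 < m p.1 ∧ T p.1 p.2 = (i : ℕ) + 1}) := by
  induction k with
  | zero =>
      intro _ m α hm hα hsum hdom
      have hall : ∀ i, α i = 0 := fun i => hα i (Nat.zero_le _)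
      have hmz : ∀ r, m r = 0 := by
        have h0 : ∑ i, m i = 0 := by rw [← hsum]; simp [hall]
        intro r
        exact (Finset.sum_eq_zero_iff.mp h0) r (Finset.mem_univ r)
      refine ⟨fun _ _ => 0, ⟨?_, ?_, ?_⟩, ?_, ?_, ?_⟩
      · intro r c hc; rw [hmz r] at hc; omega
      · intro r c c' _ hc'; rw [hmz r] at hc'
      · intro r r' _ c hc _; rw [hmz r'] at hc; omega
      · intro r c _; rfl
      · intro r c hc; rw [hmz r] at hc
      · intro i
        have hempty : {p : Fin n × ℕ | p.2 < m p.1 ∧ (fun _ _ => 0 : Fin n → ℕ → ℕ) p.1 p.2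
            = (i : ℕ) + 1} = ∅ := by
          ext p; simp
        rw [hempty, Set.ncard_empty, hall i]
  | succ k ih =>
      intro hk1 m α hm hα hsum hdom
      have hkn : k < n := hk1
      have npos : 0 < n := by omega
      have ha0 : α ⟨k, hkn⟩ ≤ m ⟨0, npos⟩ := by
        have h1 := hdom {⟨k, hkn⟩}
        rw [Finset.sum_singleton, Finset.card_singleton] at h1
        have h2 : npsum m 1 = m ⟨0, npos⟩ := by
          have h0 : npsum m 0 = 0 := by simp [npsum]
          have := npsum_succ m npos
          simpa [h0] using this
        omega
      set a := α ⟨k, hkn⟩ with ha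
      set mext : ℕ → ℕ := fun r => if h : r < n then m ⟨r, h⟩ else 0 with hmext
      have hext_r : ∀ r : Fin n, mext (r : ℕ) = m r := fun r => by
        simp only [hmext, dif_pos r.2, Fin.eta]
      have hmext_anti : ∀ s t : ℕ, s ≤ t → mext t ≤ mext s := by
        intro s t hst
        by_cases h2 : t < n
        · have h1 : s < n := by omega
          simp only [hmext, dif_pos h1, dif_pos h2]
          exact hm (show (⟨s, h1⟩ : Fin n) ≤ ⟨t, h2⟩ from by simp [Fin.le_def]; omega)
        · by_cases h1 : s < n
          · simp only [hmext, dif_pos h1, dif_neg h2]; exact Nat.zero_le _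
          · simp only [hmext, dif_neg h1, dif_neg h2]
            exact le_rfl
      set ν : Fin n → ℕ := fun r => m r - min a (m r) + min a (mext ((r : ℕ) + 1)) with hν
      have hstrip1 : ∀ r : Fin n, mext ((r : ℕ) + 1) ≤ ν r := by
        intro r
        have h1 : mext ((r : ℕ) + 1) ≤ m r := by
          rw [← hext_r r]; exact hmext_anti _ _ (Nat.le_succ _)
        simp only [hν]
        omega
      have hstrip2 : ∀ r : Fin n, ν r ≤ m r := by
        intro r
        have h1 : mext ((r : ℕ) + 1) ≤ m r := by
          rw [← hext_r r]; exact hmext_anti _ _ (Nat.le_succ _)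
        simp only [hν]
        omega
      have hν_anti : Antitone ν := by
        intro r r' hle
        rcases eq_or_lt_of_le hle with heq | hlt
        · rw [heq]
        · have h1 : (r : ℕ) + 1 ≤ (r' : ℕ) := hlt
          have h2 : m r' ≤ mext ((r : ℕ) + 1) := by
            rw [← hext_r r']; exact hmext_anti _ _ h1
          exact le_trans (le_trans (hstrip2 r') h2) (hstrip1 r)
      have hcross : ∀ r r' : Fin n, r < r' → m r' ≤ ν r := by
        intro r r' hlt
        have h1 : (r : ℕ) + 1 ≤ (r' : ℕ) := hlt
        have h2 : m r' ≤ mext ((r : ℕ) + 1) := by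
          rw [← hext_r r']; exact hmext_anti _ _ h1
        exact le_trans h2 (hstrip1 r)
      have hnpsum_nu : ∀ t, t ≤ n → npsum m t = npsum ν t + (a - min a (mext t)) := by
        intro t htn
        have hδ : ∀ i : Fin n, i ∈ univ.filter (fun i : Fin n => (i : ℕ) < t) →
            m i = ν i + (min a (mext (i : ℕ)) - min a (mext ((i : ℕ) + 1))) := by
          intro i _
          have h1 : mext ((i : ℕ) + 1) ≤ m i := by
            rw [← hext_r i]; exact hmext_anti _ _ (Nat.le_succ _)
          have h2 := hext_r i
          simp only [hν]
          omega
        have hg : ∀ s t : ℕ, s ≤ t → min a (mext t) ≤ min a (mext s) :=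
          fun s t h => min_le_min le_rfl (hmext_anti s t h)
        calc npsum m t = ∑ i ∈ univ.filter (fun i : Fin n => (i : ℕ) < t), m i :=
              npsum_eq_filter m t
          _ = ∑ i ∈ univ.filter (fun i : Fin n => (i : ℕ) < t),
                (ν i + (min a (mext (i : ℕ)) - min a (mext ((i : ℕ) + 1)))) :=
              Finset.sum_congr rfl hδ
          _ = npsum ν t + ∑ i ∈ univ.filter (fun i : Fin n => (i : ℕ) < t),
                (min a (mext (i : ℕ)) - min a (mext ((i : ℕ) + 1))) := by
              rw [Finset.sum_add_distrib, npsum_eq_filter]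
          _ = npsum ν t + ∑ r ∈ Finset.range t, (min a (mext r) - min a (mext (r + 1))) := by
              rw [sum_filter_val htn (fun r => min a (mext r) - min a (mext (r + 1)))]
          _ = npsum ν t + (min a (mext 0) - min a (mext t)) := by
              rw [tele_sum (fun r => min a (mext r)) hg t]
          _ = npsum ν t + (a - min a (mext t)) := by
              have h0 : mext 0 = m ⟨0, npos⟩ := by simp only [hmext, dif_pos npos]
              rw [h0, min_eq_left ha0]
      have hasum : a ≤ ∑ i, m i :=
        le_trans ha0 (Finset.single_le_sum (fun i _ => Nat.zero_le (m i)) (Finset.mem_univ _))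
      have hνsum : ∑ i, ν i = ∑ i, m i - a := by
        have h1 := hnpsum_nu n le_rfl
        rw [npsum_total m le_rfl, npsum_total ν le_rfl] at h1
        have h2 : mext n = 0 := by simp [hmext]
        rw [h2] at h1
        simp only [Nat.min_zero, Nat.sub_zero] at h1
        omega
      set α' := Function.update α ⟨k, hkn⟩ 0 with hα'
      have hα'sum : ∑ i, α' i = ∑ i, α i - a := by
        have h1 : ∑ i, α i = α ⟨k, hkn⟩ + ∑ i ∈ univ.erase ⟨k, hkn⟩, α i :=
          (Finset.add_sum_erase univ α (Finset.mem_univ _)).symm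
        have h2 : ∑ i, α' i = α' ⟨k, hkn⟩ + ∑ i ∈ univ.erase ⟨k, hkn⟩, α' i :=
          (Finset.add_sum_erase univ α' (Finset.mem_univ _)).symm
        have h3 : α' ⟨k, hkn⟩ = 0 := by simp [hα']
        have h4 : ∑ i ∈ univ.erase ⟨k, hkn⟩, α' i = ∑ i ∈ univ.erase ⟨k, hkn⟩, α i := by
          apply Finset.sum_congr rfl
          intro i hi
          rw [hα', Function.update_of_ne (Finset.ne_of_mem_erase hi)]
        rw [h2, h3, h4, zero_add]
        omega
      have hα'0 : ∀ i : Fin n, k ≤ (i : ℕ) → α' i = 0 := by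
        intro i hi
        rcases eq_or_ne i ⟨k, hkn⟩ with rfl | hne
        · simp [hα']
        · rw [hα', Function.update_of_ne hne]
          apply hα i
          have : (i : ℕ) ≠ k := fun h => hne (Fin.ext h)
          omega
      have hdom' : ∀ S : Finset (Fin n), ∑ i ∈ S, α' i ≤ npsum ν S.card := by
        intro S
        have hsub : ∑ i ∈ S, α' i = ∑ i ∈ S.filter (fun i : Fin n => (i : ℕ) < k), α' i := by
          symm
          apply Finset.sum_subset (Finset.filter_subset _ _)
          intro i hiS hiS'
          have hik : ¬ (i : ℕ) < k := by
            intro hcon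
            exact hiS' (Finset.mem_filter.mpr ⟨hiS, hcon⟩)
          exact hα'0 i (by omega)
        have hS'α : ∀ i ∈ S.filter (fun i : Fin n => (i : ℕ) < k), α' i = α i := by
          intro i hi
          have hik : (i : ℕ) < k := (Finset.mem_filter.mp hi).2
          rw [hα', Function.update_of_ne]
          intro hcon
          rw [hcon] at hik
          simp at hik
        have ht' : (S.filter (fun i : Fin n => (i : ℕ) < k)).card ≤ k := by
          have hsub2 : S.filter (fun i : Fin n => (i : ℕ) < k)
              ⊆ univ.filter (fun i : Fin n => (i : ℕ) < k) := by
            intro i hi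
            exact Finset.mem_filter.mpr ⟨Finset.mem_univ _, (Finset.mem_filter.mp hi).2⟩
          have := Finset.card_le_card hsub2
          rw [card_filter_lt] at this
          omega
        have htn : (S.filter (fun i : Fin n => (i : ℕ) < k)).card < n := by omega
        have hkey : ∑ i ∈ S.filter (fun i : Fin n => (i : ℕ) < k), α i
            ≤ npsum ν (S.filter (fun i : Fin n => (i : ℕ) < k)).card := by
          have heq := hnpsum_nu (S.filter (fun i : Fin n => (i : ℕ) < k)).card (le_of_lt htn)
          have hdomS := hdom (S.filter (fun i : Fin n => (i : ℕ) < k))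
          by_cases hcase : a ≤ mext (S.filter (fun i : Fin n => (i : ℕ) < k)).card
          · rw [min_eq_left hcase] at heq
            omega
          · push_neg at hcase
            rw [min_eq_right (le_of_lt hcase)] at heq
            have hknotin : (⟨k, hkn⟩ : Fin n) ∉ S.filter (fun i : Fin n => (i : ℕ) < k) := by
              intro hcon
              have := (Finset.mem_filter.mp hcon).2
              simp at this
            have hins := hdom (insert ⟨k, hkn⟩ (S.filter (fun i : Fin n => (i : ℕ) < k)))
            rw [Finset.sum_insert hknotin, Finset.card_insert_of_notMem hknotin] at hins
            have hsucc : npsum m ((S.filter (fun i : Fin n => (i : ℕ) < k)).card + 1)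
                = npsum m (S.filter (fun i : Fin n => (i : ℕ) < k)).card
                  + mext (S.filter (fun i : Fin n => (i : ℕ) < k)).card := by
              rw [npsum_succ m htn]
              congr 1
              simp only [hmext, dif_pos htn]
            omega
        calc ∑ i ∈ S, α' i = ∑ i ∈ S.filter (fun i : Fin n => (i : ℕ) < k), α i := by
              rw [hsub]; exact Finset.sum_congr rfl hS'α
          _ ≤ npsum ν (S.filter (fun i : Fin n => (i : ℕ) < k)).card := hkey
          _ ≤ npsum ν S.card := npsum_mono ν (Finset.card_le_card (Finset.filter_subset _ _))
      have hsum' : ∑ i, α' i = ∑ i, ν i := by rw [hα'sum, hνsum, hsum]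
      obtain ⟨T', hT'ssyt, hT'0, hT'le, hT'w⟩ :=
        ih (by omega) ν α' hν_anti hα'0 hsum' hdom'
      refine ⟨fun r c => if c < ν r then T' r c else if c < m r then k + 1 else 0,
        ⟨?_, ?_, ?_⟩, ?_, ?_, ?_⟩
      · -- entries in [1, n]
        intro r c hc
        dsimp only
        by_cases h1 : c < ν r
        · rw [if_pos h1]
          obtain ⟨ha1, ha2⟩ := hT'ssyt.1 r c h1
          exact ⟨ha1, ha2⟩
        · rw [if_neg h1, if_pos hc]
          exact ⟨by omega, by omega⟩
      · -- rows weakly increasing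
        intro r c c' hcc' hc'
        dsimp only
        by_cases h2 : c' < ν r
        · have h1 : c < ν r := lt_of_le_of_lt hcc' h2
          rw [if_pos h1, if_pos h2]
          exact hT'ssyt.2.1 r c c' hcc' h2
        · rw [if_neg h2, if_pos hc']
          by_cases h1 : c < ν r
          · rw [if_pos h1]
            have := hT'le r c h1
            omega
          · rw [if_neg h1, if_pos (lt_of_le_of_lt hcc' hc')]
      · -- columns strictly increasing
        intro r r' hrr' c hcr' hcr
        dsimp only
        by_cases h2 : c < ν r'
        · have h1 : c < ν r := lt_of_lt_of_le h2 (hν_anti (le_of_lt hrr'))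
          rw [if_pos h1, if_pos h2]
          exact hT'ssyt.2.2 r r' hrr' c h2 h1
        · -- c ≥ ν r' but c < m r' ≤ ν r
          have h1 : c < ν r := lt_of_lt_of_le hcr' (hcross r r' hrr')
          rw [if_pos h1, if_neg h2, if_pos hcr']
          have := hT'le r c h1
          omega
      · -- zero outside
        intro r c hc
        dsimp only
        rw [if_neg (by have := hstrip2 r; omega), if_neg (by omega)]
      · -- entries at most k+1
        intro r c hc
        dsimp only
        by_cases h1 : c < ν r
        · rw [if_pos h1]
          have := hT'le r c h1
          omega
        · rw [if_neg h1, if_pos hc]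
      · -- weights
        intro i
        dsimp only
        rcases lt_trichotomy (i : ℕ) k with hik | hik | hik
        · -- small values : inherited from T'
          have hset : {p : Fin n × ℕ | p.2 < m p.1 ∧
                (if p.2 < ν p.1 then T' p.1 p.2 else if p.2 < m p.1 then k + 1 else 0)
                  = (i : ℕ) + 1}
              = {p : Fin n × ℕ | p.2 < ν p.1 ∧ T' p.1 p.2 = (i : ℕ) + 1} := by
            ext p
            simp only [Set.mem_setOf_eq]
            constructor
            · rintro ⟨h1, h2⟩
              by_cases h3 : p.2 < ν p.1
              · rw [if_pos h3] at h2; exact ⟨h3, h2⟩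
              · rw [if_neg h3, if_pos h1] at h2; omega
            · rintro ⟨h1, h2⟩
              refine ⟨lt_of_lt_of_le h1 (hstrip2 p.1), ?_⟩
              rw [if_pos h1]; exact h2
          rw [hset, ← hT'w i, hα', Function.update_of_ne]
          intro hcon
          rw [hcon] at hik
          simp at hik
        · -- value k + 1 : the strip
          have hset : {p : Fin n × ℕ | p.2 < m p.1 ∧
                (if p.2 < ν p.1 then T' p.1 p.2 else if p.2 < m p.1 then k + 1 else 0)
                  = (i : ℕ) + 1}
              = {p : Fin n × ℕ | p.2 < m p.1 ∧ ν p.1 ≤ p.2} := by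
            ext p
            simp only [Set.mem_setOf_eq]
            constructor
            · rintro ⟨h1, h2⟩
              refine ⟨h1, ?_⟩
              by_contra h3
              push_neg at h3
              rw [if_pos h3] at h2
              have := hT'le p.1 p.2 h3
              omega
            · rintro ⟨h1, h2⟩
              refine ⟨h1, ?_⟩
              rw [if_neg (by omega), if_pos h1, hik]
          rw [hset]
          have hcount : {p : Fin n × ℕ | p.2 < m p.1 ∧ ν p.1 ≤ p.2}.ncard
              = ∑ r : Fin n, (m r - ν r) := by
            rw [ncard_boxes m (fun p => ν p.1 ≤ p.2)]
            rw [card_boxes_row m (fun r => Finset.single_le_sum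
              (fun i _ => Nat.zero_le (m i)) (Finset.mem_univ r)) (fun p => ν p.1 ≤ p.2)]
            apply Finset.sum_congr rfl
            intro r _
            have hIco : (Finset.range (m r)).filter (fun c => ν r ≤ c)
                = Finset.Ico (ν r) (m r) := by
              ext c
              simp only [Finset.mem_filter, Finset.mem_range, Finset.mem_Ico]
              omega
            rw [hIco, Nat.card_Ico]
          rw [hcount]
          have hsumdiff : ∑ r : Fin n, (m r - ν r) = a := by
            rw [Finset.sum_tsub_distrib univ (fun r _ => hstrip2 r)]
            omega
          have hieq : i = ⟨k, hkn⟩ := Fin.ext (by simp [hik])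
          rw [hsumdiff, hieq, ha]
        · -- large values : empty
          have hz : α i = 0 := hα i (by omega)
          have hset : {p : Fin n × ℕ | p.2 < m p.1 ∧
                (if p.2 < ν p.1 then T' p.1 p.2 else if p.2 < m p.1 then k + 1 else 0)
                  = (i : ℕ) + 1} = ∅ := by
            ext p
            simp only [Set.mem_setOf_eq, Set.mem_empty_iff_false, iff_false, not_and]
            intro h1
            by_cases h3 : p.2 < ν p.1
            · rw [if_pos h3]
              have := hT'le p.1 p.2 h3
              omega
            · rw [if_neg h3, if_pos h1]
              omega
          rw [hset, Set.ncard_empty, hz]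


lemma bounded_tableaux_finite {n : ℕ} (lam : Fin n → ℕ) :
    {T : Fin n → ℕ → ℕ | (∀ r c, T r c ≤ n) ∧
      ∀ (r : Fin n) (c : ℕ), lam r ≤ c → T r c = 0}.Finite := by
  apply Set.Finite.of_finite_image
    (f := fun (T : Fin n → ℕ → ℕ) (q : Fin n × Fin (∑ i, lam i)) =>
      (⟨min (T q.1 (q.2 : ℕ)) n, Nat.lt_succ_of_le (min_le_right _ _)⟩ : Fin (n + 1)))
  · exact Set.toFinite _
  · intro T hT T' hT' hEq
    funext r c
    rcases lt_or_ge c (∑ i, lam i) with hc | hc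
    · have h := congrFun hEq (r, ⟨c, hc⟩)
      simp only [Fin.mk.injEq] at h
      have h1 : T r c ≤ n := hT.1 r c
      have h2 : T' r c ≤ n := hT'.1 r c
      omega
    · have h1 : lam r ≤ c := le_trans (Finset.single_le_sum
        (fun i _ => Nat.zero_le (lam i)) (Finset.mem_univ r)) hc
      rw [hT.2 r c h1, hT'.2 r c h1]

lemma ssyt_set_finite {n : ℕ} (lam : Fin n → ℕ) (P : (Fin n → ℕ → ℕ) → Prop) :
    {T : Fin n → ℕ → ℕ | IsSSYT lam T ∧
      (∀ (r : Fin n) (c : ℕ), lam r ≤ c → T r c = 0) ∧ P T}.Finite := by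
  apply Set.Finite.subset (bounded_tableaux_finite lam)
  rintro T ⟨hssyt, h0, -⟩
  refine ⟨?_, h0⟩
  intro r c
  rcases lt_or_ge c (lam r) with hc | hc
  · exact (hssyt.1 r c hc).2
  · rw [h0 r c hc]; exact Nat.zero_le _

lemma kostka_facts {n : ℕ} {m : Fin n → ℕ} {β : Fin n →₀ ℕ} (h : kostka m β ≠ 0) :
    ∑ i, β i = ∑ i, m i ∧
      (Antitone m → ∀ S : Finset (Fin n), ∑ i ∈ S, β i ≤ npsum m S.card) := by
  obtain ⟨T, hssyt, h0, hw⟩ := Set.nonempty_of_ncard_ne_zero h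
  exact ⟨kostka_witness_sum (α := fun i => β i) hssyt hw,
    fun hm S => kostka_witness_dom (α := fun i => β i) hm hssyt hw S⟩

lemma kostka_ne_zero {n : ℕ} (m : Fin n → ℕ) (hm : Antitone m) (β : Fin n →₀ ℕ)
    (hsum : ∑ i, β i = ∑ i, m i)
    (hdom : ∀ S : Finset (Fin n), ∑ i ∈ S, β i ≤ npsum m S.card) :
    kostka m β ≠ 0 := by
  obtain ⟨T, hssyt, h0, hle, hw⟩ := ssyt_exists_aux n le_rfl m (fun i => β i) hm
    (fun i hi => absurd hi (Nat.not_le.mpr i.2)) hsum hdom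
  have hfin := ssyt_set_finite m (fun T => ∀ i : Fin n,
    β i = Set.ncard {p : Fin n × ℕ | p.2 < m p.1 ∧ T p.1 p.2 = (i : ℕ) + 1})
  rw [kostka]
  exact ((Set.ncard_pos hfin).mpr ⟨T, hssyt, h0, hw⟩).ne'

lemma grothCoeff_facts {n : ℕ} {lam mu : Fin n → ℕ} (h : grothCoeff lam mu ≠ 0) :
    (Antitone mu ∧ ∀ i, lam i ≤ mu i) ∧ flaggedCount lam mu ≠ 0
      ∧ (∀ i : Fin n, mu i ≤ lam i + (i : ℕ)) := by
  rw [grothCoeff] at h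
  by_cases hcond : Antitone mu ∧ ∀ i, lam i ≤ mu i
  · rw [if_pos hcond] at h
    have hflag : flaggedCount lam mu ≠ 0 := by
      intro h0; rw [h0] at h; simp at h
    refine ⟨hcond, hflag, ?_⟩
    obtain ⟨T, hTf, hT0⟩ := Set.nonempty_of_ncard_ne_zero hflag
    intro r
    have hcard : (Finset.Ico (lam r) (mu r)).card ≤ (Finset.Icc 1 (r : ℕ)).card := by
      apply Finset.card_le_card_of_injOn (fun c => T r c)
      · intro c hc
        rw [Finset.mem_coe, Finset.mem_Ico] at hc
        obtain ⟨h1, h2⟩ := hTf.2.1 r c hc.1 hc.2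
        exact Finset.mem_Icc.mpr ⟨h1, h2⟩
      · intro c hc c' hc' hEq
        rw [Finset.coe_Ico, Set.mem_Ico] at hc hc'
        rcases lt_trichotomy c c' with hlt | he | hlt
        · exact absurd hEq (ne_of_lt (hTf.2.2.1 r c c' hc.1 hlt hc'.2))
        · exact he
        · exact absurd hEq.symm (ne_of_lt (hTf.2.2.1 r c' c hc'.1 hlt hc.2))
    rw [Nat.card_Ico, Nat.card_Icc] at hcard
    have := hcond.2 r
    omega
  · rw [if_neg hcond] at h
    exact absurd rfl h


lemma coe_symm_equivFun {n : ℕ} (f : Fin n → ℕ) (i : Fin n) :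
    (Finsupp.equivFunOnFinite.symm f) i = f i := by
  simp [Finsupp.equivFunOnFinite]
  rfl

lemma mem_Iic_iff {n : ℕ} (β : Fin n →₀ ℕ) (f : Fin n → ℕ) :
    β ∈ Finset.Iic (Finsupp.equivFunOnFinite.symm f) ↔ ∀ i, β i ≤ f i := by
  rw [Finset.mem_Iic, Finsupp.le_def]
  constructor
  · intro h i; have := h i; rwa [coe_symm_equivFun] at this
  · intro h i; rw [coe_symm_equivFun]; exact h i

lemma coeff_schur {n : ℕ} (lam : Fin n → ℕ) (β : Fin n →₀ ℕ) :
    MvPolynomial.coeff β (schur lam) = (kostka lam β : ℝ) := by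
  rw [schur, MvPolynomial.coeff_sum]
  simp only [MvPolynomial.coeff_smul, MvPolynomial.coeff_monomial, smul_eq_mul, mul_ite, mul_one,
    mul_zero]
  rw [Finset.sum_ite_eq' (Finset.Iic (Finsupp.equivFunOnFinite.symm
    (fun _ : Fin n => ∑ i, lam i))) β (fun α => (kostka lam α : ℝ))]
  split
  · rfl
  · rename_i hβ
    have hz : kostka lam β = 0 := by
      by_contra hk
      obtain ⟨hs, -⟩ := kostka_facts hk
      apply hβ
      rw [mem_Iic_iff]
      intro i
      calc β i ≤ ∑ j, β j :=
            Finset.single_le_sum (fun j _ => Nat.zero_le (β j)) (Finset.mem_univ i)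
        _ = ∑ j, lam j := hs
    rw [hz]; simp

lemma coeff_groth {n : ℕ} (lam : Fin n → ℕ) (β : Fin n →₀ ℕ) :
    MvPolynomial.coeff β (grothendieck lam)
      = ∑ m ∈ Finset.Iic (Finsupp.equivFunOnFinite.symm (fun i : Fin n => lam i + (i : ℕ))),
          grothCoeff lam (fun i => m i) * (kostka (fun i => m i) β : ℝ) := by
  rw [grothendieck, MvPolynomial.coeff_sum]
  apply Finset.sum_congr rfl
  intro m _
  rw [MvPolynomial.coeff_smul, smul_eq_mul, coeff_schur]

lemma degree_eq_sum {n : ℕ} (β : Fin n →₀ ℕ) : β.degree = ∑ i, β i := by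
  have h : β.degree = ∑ i ∈ β.support, β i := rfl
  rw [h]
  exact Finset.sum_subset (Finset.subset_univ _)
    (fun i _ hni => Finsupp.notMem_support_iff.mp hni)

lemma coeff_component_char {n : ℕ} (lam : Fin n → ℕ) (k : ℕ) (β : Fin n →₀ ℕ)
    (hβ : ∑ i, β i = ∑ i, lam i + k) :
    (MvPolynomial.coeff β (MvPolynomial.homogeneousComponent (∑ i, lam i + k)
        (grothendieck lam)) ≠ 0)
      ↔ ∃ mu : Fin n → ℕ, Antitone mu ∧ (∑ i, mu i = ∑ i, lam i + k) ∧
          grothCoeff lam mu ≠ 0 ∧ kostka mu β ≠ 0 ∧ (∀ i : Fin n, mu i ≤ lam i + (i : ℕ)) := by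
  rw [MvPolynomial.coeff_homogeneousComponent, degree_eq_sum, if_pos hβ, coeff_groth]
  have hterm : ∀ m ∈ Finset.Iic (Finsupp.equivFunOnFinite.symm
      (fun i : Fin n => lam i + (i : ℕ))),
      grothCoeff lam (fun i => m i) * (kostka (fun i => m i) β : ℝ)
        = (-1 : ℝ) ^ k * (if Antitone (fun i => m i) ∧ ∀ i, lam i ≤ m i
            then (flaggedCount lam (fun i => m i) : ℝ) * (kostka (fun i => m i) β : ℝ)
            else 0) := by
    intro m _
    by_cases hkz : kostka (fun i => m i) β = 0
    · rw [hkz]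
      simp
    · obtain ⟨hs, -⟩ := kostka_facts hkz
      rw [grothCoeff]
      by_cases hcond : Antitone (fun i => m i) ∧ ∀ i, lam i ≤ m i
      · rw [if_pos hcond, if_pos hcond]
        have hpow : ∑ i, m i - ∑ i, lam i = k := by omega
        rw [hpow]
        ring
      · rw [if_neg hcond, if_neg hcond, zero_mul, mul_zero]
  rw [Finset.sum_congr rfl hterm, ← Finset.mul_sum]
  have hnonneg : ∀ m ∈ Finset.Iic (Finsupp.equivFunOnFinite.symm
      (fun i : Fin n => lam i + (i : ℕ))),
      (0 : ℝ) ≤ (if Antitone (fun i => m i) ∧ ∀ i, lam i ≤ m i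
        then (flaggedCount lam (fun i => m i) : ℝ) * (kostka (fun i => m i) β : ℝ) else 0) := by
    intro m _
    split
    · positivity
    · exact le_rfl
  constructor
  · intro h
    have hsum_ne : (∑ m ∈ Finset.Iic (Finsupp.equivFunOnFinite.symm
        (fun i : Fin n => lam i + (i : ℕ))),
        (if Antitone (fun i => m i) ∧ ∀ i, lam i ≤ m i
          then (flaggedCount lam (fun i => m i) : ℝ) * (kostka (fun i => m i) β : ℝ)
          else 0)) ≠ 0 := by
      intro h0
      rw [h0, mul_zero] at h
      exact h rfl
    have hex : ∃ m ∈ Finset.Iic (Finsupp.equivFunOnFinite.symm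
        (fun i : Fin n => lam i + (i : ℕ))),
        (if Antitone (fun i => m i) ∧ ∀ i, lam i ≤ m i
          then (flaggedCount lam (fun i => m i) : ℝ) * (kostka (fun i => m i) β : ℝ)
          else 0) ≠ 0 := by
      by_contra hall
      push_neg at hall
      exact hsum_ne (Finset.sum_eq_zero hall)
    obtain ⟨m, hmIic, hne⟩ := hex
    have hcond : Antitone (fun i => m i) ∧ ∀ i, lam i ≤ m i := by
      by_contra hc
      rw [if_neg hc] at hne
      exact hne rfl
    rw [if_pos hcond] at hne
    have hflag : flaggedCount lam (fun i => m i) ≠ 0 := by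
      intro h0; rw [h0] at hne; simp at hne
    have hkz : kostka (fun i => m i) β ≠ 0 := by
      intro h0; rw [h0] at hne; simp at hne
    obtain ⟨hs, -⟩ := kostka_facts hkz
    have hs' : ∑ i, β i = ∑ i, m i := by simpa using hs
    refine ⟨fun i => m i, hcond.1,
      by show (∑ i, m i) = ∑ i, lam i + k; omega, ?_, hkz, (mem_Iic_iff m _).mp hmIic⟩
    rw [grothCoeff, if_pos hcond]
    exact mul_ne_zero (pow_ne_zero _ (by norm_num)) (Nat.cast_ne_zero.mpr hflag)
  · rintro ⟨mu, hanti, hsmu, hgc, hkz, hbnd⟩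
    apply mul_ne_zero (pow_ne_zero _ (by norm_num : (-1 : ℝ) ≠ 0))
    have hcoe : (fun i => (Finsupp.equivFunOnFinite.symm mu) i) = mu :=
      funext (coe_symm_equivFun mu)
    have hmem : Finsupp.equivFunOnFinite.symm mu ∈ Finset.Iic (Finsupp.equivFunOnFinite.symm
        (fun i : Fin n => lam i + (i : ℕ))) := (mem_Iic_iff _ _).mpr (by
      intro i
      rw [coe_symm_equivFun]
      exact hbnd i)
    obtain ⟨hcond, hflag, -⟩ := grothCoeff_facts hgc
    have hpos : (0 : ℝ) < (if Antitone (fun i => (Finsupp.equivFunOnFinite.symm mu) i)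
        ∧ ∀ i, lam i ≤ (Finsupp.equivFunOnFinite.symm mu) i
        then (flaggedCount lam (fun i => (Finsupp.equivFunOnFinite.symm mu) i) : ℝ)
          * (kostka (fun i => (Finsupp.equivFunOnFinite.symm mu) i) β : ℝ) else 0) := by
      simp only [hcoe]
      rw [if_pos hcond]
      exact mul_pos (by exact_mod_cast Nat.pos_of_ne_zero hflag)
        (by exact_mod_cast Nat.pos_of_ne_zero hkz)
    have := Finset.sum_pos' hnonneg ⟨Finsupp.equivFunOnFinite.symm mu, hmem, hpos⟩
    exact ne_of_gt this

end SNPAux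

/-- If every partition of size `s = |λ| + k` appearing with nonzero coefficient in the Schur
expansion of the degree-`s` homogeneous component of `G_λ` is dominated by `μ*`, and `μ*`
itself appears, then the Newton polytope of that component is the permutahedron `P_{μ*}` and
the component has SNP. -/
theorem component_snp_of_dominance_max {n : ℕ} (lam : Fin n → ℕ) (hlam : Antitone lam)
    (k : ℕ) (mustar : Fin n → ℕ) (hstar : Antitone mustar)
    (hsize : ∑ i, mustar i = ∑ i, lam i + k)
    (hmem : grothCoeff lam mustar ≠ 0)
    (hmax : ∀ mu : Fin n → ℕ, Antitone mu → (∑ i, mu i = ∑ i, lam i + k) →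
      grothCoeff lam mu ≠ 0 → ∀ t, npsum mu t ≤ npsum mustar t) :
    newton (MvPolynomial.homogeneousComponent (∑ i, lam i + k) (grothendieck lam))
        = permutahedron (fun i => (mustar i : ℝ)) ∧
      SNP (MvPolynomial.homogeneousComponent (∑ i, lam i + k) (grothendieck lam)) := by
  classical
  obtain ⟨hcondstar, hflagstar, hbndstar⟩ := SNPAux.grothCoeff_facts hmem
  have hdeg : ∀ β : Fin n →₀ ℕ,
      MvPolynomial.coeff β (MvPolynomial.homogeneousComponent (∑ i, lam i + k)
        (grothendieck lam)) ≠ 0 → ∑ i, β i = ∑ i, lam i + k := by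
    intro β hb
    rw [MvPolynomial.coeff_homogeneousComponent] at hb
    split at hb
    · next h => rw [SNPAux.degree_eq_sum] at h; exact h
    · exact absurd rfl hb
  have hsupP : ∀ β ∈ (MvPolynomial.homogeneousComponent (∑ i, lam i + k)
      (grothendieck lam)).support,
      (fun i => (β i : ℝ)) ∈ permutahedron (fun i => (mustar i : ℝ)) := by
    intro β hβmem
    have hb := MvPolynomial.mem_support_iff.mp hβmem
    have hdegβ := hdeg β hb
    obtain ⟨mu, hanti, hsmu, hgc, hkz, -⟩ := (SNPAux.coeff_component_char lam k β hdegβ).mp hb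
    obtain ⟨hs, hdomm⟩ := SNPAux.kostka_facts hkz
    have hdomstar : ∀ S : Finset (Fin n), ∑ i ∈ S, β i ≤ npsum mustar S.card :=
      fun S => le_trans (hdomm hanti S) (hmax mu hanti hsmu hgc S.card)
    have hsumeq : ∑ i, β i = ∑ i, mustar i := by omega
    exact SNPAux.mem_permutahedron_of_majorizes
      (SNPAux.majorizes_of_natdom hstar hdomstar hsumeq)
  have horbE : {x : Fin n → ℝ | ∃ σ : Equiv.Perm (Fin n), x = (fun i => (mustar i : ℝ)) ∘ σ}
      ⊆ (fun α : Fin n →₀ ℕ => fun i => (α i : ℝ)) ''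
        ((MvPolynomial.homogeneousComponent (∑ i, lam i + k) (grothendieck lam)).support :
          Set (Fin n →₀ ℕ)) := by
    rintro x ⟨σ, rfl⟩
    have hcoeβ : ∀ i, (Finsupp.equivFunOnFinite.symm (fun i => mustar (σ i))) i
        = mustar (σ i) := fun i => SNPAux.coe_symm_equivFun _ i
    have hsumβ : ∑ i, (Finsupp.equivFunOnFinite.symm (fun i => mustar (σ i))) i
        = ∑ i, lam i + k := by
      rw [Finset.sum_congr rfl (fun i _ => hcoeβ i), Equiv.sum_comp σ mustar]
      exact hsize
    have hdomβ : ∀ S : Finset (Fin n),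
        ∑ i ∈ S, (Finsupp.equivFunOnFinite.symm (fun i => mustar (σ i))) i
          ≤ npsum mustar S.card := by
      intro S
      have h1 : ∑ i ∈ S, (Finsupp.equivFunOnFinite.symm (fun i => mustar (σ i))) i
          = ∑ j ∈ S.image σ, mustar j := by
        rw [Finset.sum_image (fun a _ b _ h => σ.injective h)]
        exact Finset.sum_congr rfl (fun i _ => hcoeβ i)
      rw [h1]
      calc ∑ j ∈ S.image σ, mustar j
          ≤ ∑ i ∈ univ.filter (fun i : Fin n => (i : ℕ) < (S.image σ).card), mustar i :=
            SNPAux.sum_le_initial mustar hstar _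
        _ = npsum mustar (S.image σ).card := (SNPAux.npsum_eq_filter _ _).symm
        _ = npsum mustar S.card := by rw [Finset.card_image_of_injective S σ.injective]
    have hkβ : kostka mustar (Finsupp.equivFunOnFinite.symm (fun i => mustar (σ i))) ≠ 0 :=
      SNPAux.kostka_ne_zero mustar hstar _ (by rw [hsumβ]; omega) hdomβ
    have hcoeff := (SNPAux.coeff_component_char lam k _ hsumβ).mpr
      ⟨mustar, hstar, hsize, hmem, hkβ, hbndstar⟩
    refine ⟨Finsupp.equivFunOnFinite.symm (fun i => mustar (σ i)),
      MvPolynomial.mem_support_iff.mpr hcoeff, ?_⟩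
    funext i
    simp only [Function.comp_apply]
    rw [hcoeβ i]
  have h1 : newton (MvPolynomial.homogeneousComponent (∑ i, lam i + k) (grothendieck lam))
      ⊆ permutahedron (fun i => (mustar i : ℝ)) := by
    rw [newton]
    apply convexHull_min
    · rintro x ⟨β, hβmem, rfl⟩
      exact hsupP β hβmem
    · exact convex_convexHull ℝ _
  have h2 : permutahedron (fun i => (mustar i : ℝ))
      ⊆ newton (MvPolynomial.homogeneousComponent (∑ i, lam i + k) (grothendieck lam)) := by
    rw [newton, permutahedron]
    exact convexHull_mono horbE
  have hEQ := Set.Subset.antisymm h1 h2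
  refine ⟨hEQ, ?_⟩
  intro α hα
  rw [hEQ] at hα
  have hcastanti : Antitone (fun i => (mustar i : ℝ)) :=
    fun i j hij => Nat.cast_le.mpr (hstar hij)
  have hsum' : ∑ i, α i = ∑ i, mustar i := by
    have h := SNPAux.mem_permutahedron_sum_eq (fun i => (mustar i : ℝ)) hα
    exact_mod_cast h
  have hdom' : ∀ S : Finset (Fin n), ∑ i ∈ S, α i ≤ npsum mustar S.card := by
    intro S
    have h := SNPAux.mem_permutahedron_sum_le (fun i => (mustar i : ℝ)) hα S
    rw [SNPAux.psum_decSort_antitone hcastanti, SNPAux.npsum_cast] at h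
    exact_mod_cast h
  have hkα : kostka mustar α ≠ 0 := SNPAux.kostka_ne_zero mustar hstar α hsum' hdom'
  exact (SNPAux.coeff_component_char lam k α (by omega)).mpr
    ⟨mustar, hstar, hsize, hmem, hkα, hbndstar⟩
end

section
/- In the northmost-box-adding construction starting from partition λ with boxes added at rows r_1, r_2, ..., r_N, the sequence of rows satisfies: for every r, if ℓ is the last index with r_ℓ = r, then ℓ equals the total number of boxes b_1 + ... + b_r added in rows 1 through r, where b_j is the total number of boxes added in row j. -/
open Finset

/-- Characterization of addability for an antitone shape. -/
lemma addableRow_iff {n : ℕ} (lam mu : Fin n → ℕ) (hmu : Antitone mu) (ρ : Fin n) :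
    AddableRow lam mu ρ ↔
      mu ρ < lam ρ + (ρ : ℕ) ∧ ∀ a : Fin n, a < ρ → mu ρ + 1 ≤ mu a := by
  constructor
  · rintro ⟨h1, h2⟩
    refine ⟨h1, fun a ha => ?_⟩
    have := h2 (le_of_lt ha)
    simpa [Function.update_apply, ne_of_lt ha, (ne_of_lt ha).symm] using this
  · rintro ⟨h1, h2⟩
    refine ⟨h1, fun a b hab => ?_⟩
    rcases eq_or_ne a ρ with rfl | ha
    · rcases eq_or_ne b a with rfl | hb
      · simp
      · have hab' : a < b := lt_of_le_of_ne hab (Ne.symm hb)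
        simp only [Function.update_apply, if_neg hb, if_pos rfl]
        exact le_trans (hmu (le_of_lt hab')) (Nat.le_succ _)
    · rcases eq_or_ne b ρ with rfl | hb
      · have hab' : a < b := lt_of_le_of_ne hab ha
        simp only [Function.update_apply, if_neg ha, if_pos rfl]
        exact h2 a hab'
      · simp only [Function.update_apply, if_neg ha, if_neg hb]
        exact hmu hab

/-- In the northmost-box-adding construction with boxes added at rows `r_1, …, r_N`, if `ℓ`
is the last index with `r_ℓ = r`, then `ℓ` equals the total number `b_1 + ⋯ + b_r` of boxes
added in rows `1` through `r`. -/
theorem last_box_index_eq_count {n N : ℕ} (lam : Fin n → ℕ) (hlam : Antitone lam)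
    (μ : Fin (N + 1) → Fin n → ℕ) (h0 : μ 0 = lam) (r : Fin N → Fin n)
    (hstep : ∀ k : Fin N, AddableRow lam (μ k.castSucc) (r k) ∧
      (∀ ρ' : Fin n, ρ' < r k → ¬ AddableRow lam (μ k.castSucc) ρ') ∧
      μ k.succ = Function.update (μ k.castSucc) (r k) (μ k.castSucc (r k) + 1)) :
    ∀ ℓ : Fin N, (∀ i : Fin N, ℓ < i → r i ≠ r ℓ) →
      (ℓ : ℕ) + 1 = (Finset.univ.filter (fun i : Fin N => r i ≤ r ℓ)).card := by
  -- every intermediate shape is antitone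
  have hant : ∀ k : Fin (N + 1), Antitone (μ k) := by
    intro k
    induction k using Fin.induction with
    | zero => rw [h0]; exact hlam
    | succ i _ => rw [(hstep i).2.2]; exact (hstep i).1.2
  -- rows north of the chosen row stay non-addable after the step
  have key : ∀ k : Fin N, ∀ ρ'' : Fin n, ρ'' < r k → ¬ AddableRow lam (μ k.succ) ρ'' := by
    intro k ρ'' h
    have hna := (hstep k).2.1 ρ'' h
    rw [addableRow_iff lam _ (hant k.castSucc) ρ''] at hna
    rw [addableRow_iff lam _ (hant k.succ) ρ'', (hstep k).2.2]
    have hne : ρ'' ≠ r k := ne_of_lt h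
    simp only [Function.update_apply, if_neg hne]
    rintro ⟨h1, h2⟩
    refine hna ⟨h1, fun a ha => ?_⟩
    have hane : a ≠ r k := ne_of_lt (ha.trans h)
    have := h2 a ha
    rwa [if_neg hane] at this
  -- the chosen row is monotone in the step
  have hadj : ∀ (m : ℕ) (h1 : m < N) (h2 : m + 1 < N), r ⟨m, h1⟩ ≤ r ⟨m + 1, h2⟩ := by
    intro m h1 h2
    by_contra hlt
    push_neg at hlt
    exact key ⟨m, h1⟩ (r ⟨m + 1, h2⟩) hlt (hstep ⟨m + 1, h2⟩).1
  have hmono' : ∀ (d i : ℕ) (h : i + d < N), r ⟨i, by omega⟩ ≤ r ⟨i + d, h⟩ := by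
    intro d
    induction d with
    | zero => intro i h; exact le_refl _
    | succ d ih =>
      intro i h
      have h' : i + d < N := by omega
      have hend : r ⟨i + d, h'⟩ ≤ r ⟨i + d + 1, by omega⟩ := hadj (i + d) h' (by omega)
      exact le_trans (ih i h') hend
  have hmono : ∀ i j : Fin N, i ≤ j → r i ≤ r j := by
    intro i j hij
    have hij' : (i : ℕ) ≤ (j : ℕ) := hij
    have hj : (j : ℕ) = (i : ℕ) + ((j : ℕ) - (i : ℕ)) := by omega
    have := hmono' ((j : ℕ) - (i : ℕ)) (i : ℕ) (by omega)
    have hi' : (⟨(i : ℕ), by omega⟩ : Fin N) = i := by ext; rfl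
    have hj' : (⟨(i : ℕ) + ((j : ℕ) - (i : ℕ)), by omega⟩ : Fin N) = j := by apply Fin.ext; simp only [Fin.val_mk]; omega
    rwa [hi', hj'] at this
  intro ℓ hlast
  have hset : Finset.univ.filter (fun i : Fin N => r i ≤ r ℓ) = Finset.Iic ℓ := by
    ext i
    simp only [Finset.mem_filter, Finset.mem_univ, true_and, Finset.mem_Iic]
    constructor
    · intro hri
      by_contra hgt
      push_neg at hgt
      have h1 : r ℓ ≤ r i := hmono ℓ i (le_of_lt hgt)
      have h2 : r i ≠ r ℓ := hlast i hgt
      exact h2 (le_antisymm hri h1)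
    · intro hil
      exact hmono i ℓ hil
  rw [hset, Fin.card_Iic]
end
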